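/- arXiv:1312.4306 — 10 statements merged into one kernel-verified Lean document; each statement's English description precedes it below -/
import Mathlib

section
/- Let n ≥ 4 and let (A_k)_{k∈ℤ} be an n-periodic sequence of points in the plane such that for all p ∈ [0, n-1] and all q ∈ [1, n-1] \ {p, p+1}, det(A_{p+1} - A_p, A_q - A_p) > 0 (a convex polygonal direct, CPD, with n vertices). Then the sequence (B_k) defined by B_k = A_{k+1} for 0 ≤ k ≤ n-2, extended (n-1)-periodically, is a CPD with n-1 vertices. -/
noncomputable section

/-- Determinant of two vectors of the plane in the canonical basis. -/
def det2 (v w : ℝ × ℝ) : ℝ := v.1 * w.2 - v.2 * w.1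

/-- Convex polygonal direct (CPD) with `n` vertices: an `n`-periodic sequence of
points of the plane such that every vertex `A q`, `q ∈ [1, n-1] \ {p, p+1}`, is
strictly on the positive side of the oriented edge `(A p, A (p+1))`. -/
def IsCPD (n : ℕ) (A : ℤ → ℝ × ℝ) : Prop :=
  3 ≤ n ∧ (∀ k : ℤ, A (k + n) = A k) ∧
  ∀ p q : ℤ, 0 ≤ p → p ≤ (n : ℤ) - 1 → 1 ≤ q → q ≤ (n : ℤ) - 1 →
    q ≠ p → q ≠ p + 1 → 0 < det2 (A (p + 1) - A p) (A q - A p)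

/-- First closed quadrant. -/
def Q1 (v : ℝ × ℝ) : Prop := 0 ≤ v.1 ∧ 0 ≤ v.2
/-- Second closed quadrant. -/
def Q2 (v : ℝ × ℝ) : Prop := v.1 ≤ 0 ∧ 0 ≤ v.2
/-- Third closed quadrant. -/
def Q3 (v : ℝ × ℝ) : Prop := v.1 ≤ 0 ∧ v.2 ≤ 0
/-- Fourth closed quadrant. -/
def Q4 (v : ℝ × ℝ) : Prop := 0 ≤ v.1 ∧ v.2 ≤ 0

/-- Two vectors lie in the same closed quadrant. -/
def SameQuadrant (v w : ℝ × ℝ) : Prop :=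
  (Q1 v ∧ Q1 w) ∨ (Q2 v ∧ Q2 w) ∨ (Q3 v ∧ Q3 w) ∨ (Q4 v ∧ Q4 w)

/-- The unit square `[0,1]²`. -/
def unitSquare : Set (ℝ × ℝ) := Set.Icc ((0, 0) : ℝ × ℝ) (1, 1)

/-- Membership in the family `D_{m,n}` of Farey lines: lines meeting the unit
square with an integer equation `u x + v y = w`, `|u| ≤ m`, `|v| ≤ n`,
`(u, v) ≠ (0, 0)`. -/
def IsFareyLine (m n : ℕ) (L : Set (ℝ × ℝ)) : Prop :=
  (L ∩ unitSquare).Nonempty ∧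
  ∃ u v w : ℤ, |u| ≤ (m : ℤ) ∧ |v| ≤ (n : ℤ) ∧ (u, v) ≠ (0, 0) ∧
    L = {p : ℝ × ℝ | (u : ℝ) * p.1 + (v : ℝ) * p.2 = (w : ℝ)}

/-- The Farey complex `CF(m,n)`: the complement in the unit square of the union
of the lines of `D_{m,n}`. -/
def FareyComplex (m n : ℕ) : Set (ℝ × ℝ) :=
  {p ∈ unitSquare | ∀ L, IsFareyLine m n L → p ∉ L}

/-- The closed polygonal line associated with a `p`-periodic sequence of points. -/
def Polyline (p : ℕ) (A : ℤ → ℝ × ℝ) : Set (ℝ × ℝ) :=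
  ⋃ k ∈ Finset.range p, segment ℝ (A k) (A (k + 1))


/-- Cyclic invariance of the triangle bracket. -/
lemma det2_cyclic (x y z : ℝ × ℝ) : det2 (y - x) (z - x) = det2 (z - y) (x - y) := by
  simp only [det2, Prod.fst_sub, Prod.snd_sub]
  ring

/-- Key quintic-point lemma (Plücker identity certificate):
if `b` lies strictly left of `a→o` is oriented so that `[a,o,b]>0`, and
`c, d` are strictly left of `o→b`, `b` strictly left of `c→d`, and
`d` strictly left of `a→b`, then `c` is strictly left of `a→b`. -/
lemma key_step (a o b c d : ℝ × ℝ)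
    (h1 : 0 < det2 (o - a) (b - a))
    (h4 : 0 < det2 (b - o) (c - o))
    (h5 : 0 < det2 (b - o) (d - o))
    (h6 : 0 < det2 (d - c) (b - c))
    (h8 : 0 < det2 (b - a) (d - a)) :
    0 < det2 (b - a) (c - a) := by
  have hid : det2 (b - a) (c - a) * det2 (b - o) (d - o) =
      det2 (o - a) (b - a) * det2 (d - c) (b - c) +
      det2 (b - o) (c - o) * det2 (b - a) (d - a) := by
    simp only [det2, Prod.fst_sub, Prod.snd_sub]
    ring
  nlinarith [mul_pos h1 h6, mul_pos h4 h8]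

/-- Reduction of a CPD: deleting the vertex `A 0` of a CPD with `n ≥ 4`
vertices yields a CPD with `n - 1` vertices. -/
theorem reduction_of_CPD (n : ℕ) (hn : 4 ≤ n) (A B : ℤ → ℝ × ℝ)
    (hA : IsCPD n A)
    (hB : ∀ k : ℤ, 0 ≤ k → k ≤ (n : ℤ) - 2 → B k = A (k + 1))
    (hBper : ∀ k : ℤ, B (k + ((n : ℤ) - 1)) = B k) :
    IsCPD (n - 1) B := by
  obtain ⟨hn3, hAper, hAdet⟩ := hA
  have hcast : ((n - 1 : ℕ) : ℤ) = (n : ℤ) - 1 := by omega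
  have hA0 : A ((n : ℤ)) = A 0 := by
    have := hAper 0; simpa using this
  -- the crucial claim: every A j, 2 ≤ j ≤ n-2, is strictly left of A(n-1) → A 1
  have claim : ∀ t : ℕ, (t : ℤ) ≤ (n : ℤ) - 4 →
      0 < det2 (A 1 - A ((n : ℤ) - 1)) (A ((n : ℤ) - 2 - t) - A ((n : ℤ) - 1)) := by
    intro t
    induction t with
    | zero =>
      intro _
      have h := hAdet ((n : ℤ) - 2) 1 (by omega) (by omega) (by omega) (by omega)
        (by omega) (by omega)
      have hrw : (n : ℤ) - 2 + 1 = (n : ℤ) - 1 := by ring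
      rw [hrw] at h
      have hc := det2_cyclic (A ((n : ℤ) - 2)) (A ((n : ℤ) - 1)) (A 1)
      rw [hc] at h
      have hrw2 : (n : ℤ) - 2 - (0 : ℕ) = (n : ℤ) - 2 := by push_cast; ring
      rw [hrw2]
      -- goal is [A(n-1), A1, A(n-2)]; h is [A(n-1), A1] with A(n-2) third via cyclic
      have hc2 := det2_cyclic (A ((n : ℤ) - 1)) (A 1) (A ((n : ℤ) - 2))
      rw [hc2] at h ⊢
      exact h
    | succ t ih =>
      intro ht
      have ih' := ih (by omega)
      set j : ℤ := (n : ℤ) - 2 - (t + 1 : ℕ) with hj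
      have hjrange : 2 ≤ j ∧ j ≤ (n : ℤ) - 3 := by constructor <;> [omega; omega]
      have hjd : ((n : ℤ) - 2 - (t : ℕ)) = j + 1 := by push_cast [hj]; ring
      rw [hjd] at ih'
      -- gather hypotheses for key_step with a = A(n-1), o = A 0, b = A 1, c = A j, d = A (j+1)
      have h1 : 0 < det2 (A 0 - A ((n : ℤ) - 1)) (A 1 - A ((n : ℤ) - 1)) := by
        have h := hAdet ((n : ℤ) - 1) 1 (by omega) (by omega) (by omega) (by omega)
          (by omega) (by omega)
        have hrw : (n : ℤ) - 1 + 1 = (n : ℤ) := by ring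
        rw [hrw, hA0] at h
        exact h
      have h4 : 0 < det2 (A 1 - A 0) (A j - A 0) := by
        have h := hAdet 0 j (by omega) (by omega) (by omega) (by omega)
          (by omega) (by omega)
        simpa using h
      have h5 : 0 < det2 (A 1 - A 0) (A (j + 1) - A 0) := by
        have h := hAdet 0 (j + 1) (by omega) (by omega) (by omega) (by omega)
          (by omega) (by omega)
        simpa using h
      have h6 : 0 < det2 (A (j + 1) - A j) (A 1 - A j) :=
        hAdet j 1 (by omega) (by omega) (by omega) (by omega) (by omega) (by omega)
      exact key_step (A ((n : ℤ) - 1)) (A 0) (A 1) (A j) (A (j + 1)) h1 h4 h5 h6 ih'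
  refine ⟨by omega, ?_, ?_⟩
  · intro k
    have := hBper k
    rw [hcast]
    exact this
  · intro p q hp0 hp1 hq1 hq2 hqp hqp1
    rw [hcast] at hp1 hq2
    have hBq : B q = A (q + 1) := hB q (by omega) (by omega)
    have hBp : B p = A (p + 1) := hB p (by omega) (by omega)
    by_cases hp : p ≤ (n : ℤ) - 3
    · have hBp1 : B (p + 1) = A (p + 1 + 1) := hB (p + 1) (by omega) (by omega)
      rw [hBq, hBp, hBp1]
      exact hAdet (p + 1) (q + 1) (by omega) (by omega) (by omega) (by omega)
        (by omega) (by omega)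
    · have hpval : p = (n : ℤ) - 2 := by omega
      have hBp1 : B (p + 1) = A 1 := by
        have hper := hBper 0
        have h0 : B (0 + ((n : ℤ) - 1)) = B (p + 1) := by rw [hpval]; ring_nf
        have hB0 : B 0 = A 1 := by
          have := hB 0 (by omega) (by omega); simpa using this
        rw [← h0, hper, hB0]
      rw [hBq, hBp, hBp1, hpval]
      have hqn3 : q ≤ (n : ℤ) - 3 := by omega
      have ht : (n : ℤ) - 2 - ((n - 3 - q.toNat : ℕ) : ℤ) = q + 1 := by
        have : (0:ℤ) ≤ q := by omega
        omega
      have hc := claim (n - 3 - q.toNat) (by omega)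
      rw [ht] at hc
      have hrw : (n : ℤ) - 2 + 1 = (n : ℤ) - 1 := by ring
      rw [hrw]
      exact hc
end
end

section
/- Let (A_k)_{k∈ℤ} be a CPD with n ≥ 4 vertices. Then for every k with 2 ≤ k ≤ n-2, the segments [A_0, A_k] and [A_{n-1}, A_1] cross, i.e., their relative interiors intersect. -/
noncomputable section

lemma cpd_triple (n : ℕ) (A : ℤ → ℝ × ℝ) (hA : IsCPD n A) :
    ∀ d : ℕ, ∀ i j l : ℤ, l - i ≤ d → 1 ≤ i → i < j → j < l → l ≤ (n : ℤ) - 1 →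
      0 < det2 (A j - A i) (A l - A i) := by
  obtain ⟨hn3, hper, hE⟩ := hA
  intro d
  induction d with
  | zero => intro i j l h0 h1 h2 h3 h4; exfalso; omega
  | succ d ih =>
    intro i j l hle h1 hij hjl hln
    by_cases hj1 : j = i + 1
    · subst hj1
      exact hE i l (by omega) (by omega) (by omega) hln (by omega) (by omega)
    · by_cases hjl1 : l = j + 1
      · have h := hE j i (by omega) (by omega) h1 (by omega) (by omega) (by omega)
        subst hjl1
        have e : det2 (A j - A i) (A (j + 1) - A i)
            = det2 (A (j + 1) - A j) (A i - A j) := by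
          simp only [det2, Prod.fst_sub, Prod.snd_sub]; ring
        rw [e]; exact h
      · have F1 : 0 < det2 (A (i + 1) - A i) (A j - A i) :=
          hE i j (by omega) (by omega) (by omega) (by omega) (by omega) (by omega)
        have F2 : 0 < det2 (A (i + 1) - A i) (A (l - 1) - A i) :=
          hE i (l - 1) (by omega) (by omega) (by omega) (by omega) (by omega) (by omega)
        have F3 : 0 < det2 (A (i + 1) - A i) (A l - A i) :=
          hE i l (by omega) (by omega) (by omega) (by omega) (by omega) (by omega)
        have F4' : 0 < det2 (A (l - 1 + 1) - A (l - 1)) (A i - A (l - 1)) :=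
          hE (l - 1) i (by omega) (by omega) h1 (by omega) (by omega) (by omega)
        have F4 : 0 < det2 (A (l - 1) - A i) (A l - A i) := by
          rw [show l - 1 + 1 = l by ring] at F4'
          have e : det2 (A (l - 1) - A i) (A l - A i)
              = det2 (A l - A (l - 1)) (A i - A (l - 1)) := by
            simp only [det2, Prod.fst_sub, Prod.snd_sub]; ring
          rw [e]; exact F4'
        have F5 : 0 < det2 (A j - A i) (A (l - 1) - A i) :=
          ih i j (l - 1) (by omega) h1 hij (by omega) (by omega)
        have key : det2 (A j - A i) (A l - A i) * det2 (A (i + 1) - A i) (A (l - 1) - A i) =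
            det2 (A (i + 1) - A i) (A l - A i) * det2 (A j - A i) (A (l - 1) - A i) +
            det2 (A (i + 1) - A i) (A j - A i) * det2 (A (l - 1) - A i) (A l - A i) := by
          simp only [det2, Prod.fst_sub, Prod.snd_sub]; ring
        nlinarith [mul_pos F3 F5, mul_pos F1 F4, F2, key]

/-- Lemma of the diagonals: for `2 ≤ k ≤ n - 2`, the segments `[A 0, A k]` and
`[A (n-1), A 1]` cross, i.e. meet at a point interior to both. -/
theorem diagonals_cross (n : ℕ) (hn : 4 ≤ n) (A : ℤ → ℝ × ℝ)
    (hA : IsCPD n A) (k : ℤ) (hk2 : 2 ≤ k) (hkn : k ≤ (n : ℤ) - 2) :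
    ∃ t s : ℝ, 0 < t ∧ t < 1 ∧ 0 < s ∧ s < 1 ∧
      (1 - t) • A 0 + t • A k = (1 - s) • A ((n : ℤ) - 1) + s • A 1 := by
  obtain ⟨hn3, hper, hE⟩ := hA
  have hAN : A ((n : ℤ)) = A 0 := by simpa using hper 0
  have he1 : 0 < det2 (A 1 - A 0) (A k - A 0) := by
    have h := hE 0 k (by omega) (by omega) (by omega) (by omega) (by omega) (by omega)
    rwa [show (0 : ℤ) + 1 = 1 by ring] at h
  have hg1 : 0 < det2 (A 0 - A ((n : ℤ) - 1)) (A 1 - A ((n : ℤ) - 1)) := by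
    have h := hE ((n : ℤ) - 1) 1 (by omega) (by omega) (by omega) (by omega) (by omega)
      (by omega)
    rwa [show (n : ℤ) - 1 + 1 = (n : ℤ) by ring, hAN] at h
  have hg2 : 0 < det2 (A 0 - A ((n : ℤ) - 1)) (A k - A ((n : ℤ) - 1)) := by
    have h := hE ((n : ℤ) - 1) k (by omega) (by omega) (by omega) (by omega) (by omega)
      (by omega)
    rwa [show (n : ℤ) - 1 + 1 = (n : ℤ) by ring, hAN] at h
  have hg3 : 0 < det2 (A k - A 1) (A ((n : ℤ) - 1) - A 1) :=
    cpd_triple n A ⟨hn3, hper, hE⟩ n 1 k ((n : ℤ) - 1) (by omega) (by omega) (by omega)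
      (by omega) (by omega)
  set e1 : ℝ := det2 (A 1 - A 0) (A k - A 0) with he1d
  set g1 : ℝ := det2 (A 0 - A ((n : ℤ) - 1)) (A 1 - A ((n : ℤ) - 1)) with hg1d
  set g2 : ℝ := det2 (A 0 - A ((n : ℤ) - 1)) (A k - A ((n : ℤ) - 1)) with hg2d
  set g3 : ℝ := det2 (A k - A 1) (A ((n : ℤ) - 1) - A 1) with hg3d
  have hid : e1 + g2 = g1 + g3 := by
    rw [he1d, hg1d, hg2d, hg3d]
    simp only [det2, Prod.fst_sub, Prod.snd_sub]; ring
  have hS : (0 : ℝ) < e1 + g2 := by linarith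
  have hS0 : e1 + g2 ≠ 0 := ne_of_gt hS
  refine ⟨g1 / (e1 + g2), g2 / (e1 + g2), div_pos hg1 hS, ?_, div_pos hg2 hS, ?_, ?_⟩
  · rw [div_lt_one hS]; linarith
  · rw [div_lt_one hS]; linarith
  · have hx : (1 - g1 / (e1 + g2)) * (A 0).1 + (g1 / (e1 + g2)) * (A k).1
        = (1 - g2 / (e1 + g2)) * (A ((n : ℤ) - 1)).1 + (g2 / (e1 + g2)) * (A 1).1 := by
      field_simp
      rw [he1d, hg1d, hg2d]
      simp only [det2, Prod.fst_sub, Prod.snd_sub]; ring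
    have hy : (1 - g1 / (e1 + g2)) * (A 0).2 + (g1 / (e1 + g2)) * (A k).2
        = (1 - g2 / (e1 + g2)) * (A ((n : ℤ) - 1)).2 + (g2 / (e1 + g2)) * (A 1).2 := by
      field_simp
      rw [he1d, hg1d, hg2d]
      simp only [det2, Prod.fst_sub, Prod.snd_sub]; ring
    exact Prod.ext (by simpa using hx) (by simpa using hy)
end
end

section
/- Let (A_k) be a CPD with n ≥ 5 vertices such that no two consecutive edge vectors A_k - A_{k-1} and A_{k+1} - A_k lie in the same (closed) quadrant. Suppose A_1 - A_0 lies in the first quadrant Q_1 = {(x,y) : x ≥ 0, y ≥ 0}, and let q with 2 ≤ q ≤ n-2 be such that A_{q+1} - A_q also lies in Q_1. Then the vector A_q - A_1 does not lie in Q_1. -/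
noncomputable section

/-- Second key lemma: if no two consecutive edge vectors of a CPD with `n ≥ 5`
vertices lie in the same closed quadrant, `A 1 - A 0 ∈ Q1` and
`A (q+1) - A q ∈ Q1` for some `2 ≤ q ≤ n - 2`, then `A q - A 1 ∉ Q1`. -/
theorem not_same_quadrant_diagonal (n : ℕ) (hn : 5 ≤ n) (A : ℤ → ℝ × ℝ)
    (hA : IsCPD n A)
    (hcons : ∀ k : ℤ, ¬ SameQuadrant (A k - A (k - 1)) (A (k + 1) - A k))
    (h0 : Q1 (A 1 - A 0))
    (q : ℤ) (hq2 : 2 ≤ q) (hqn : q ≤ (n : ℤ) - 2)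
    (hq : Q1 (A (q + 1) - A q)) :
    ¬ Q1 (A q - A 1) := by
  intro hv
  obtain ⟨hn3, hper, hdet⟩ := hA
  have hn' : (5:ℤ) ≤ (n:ℤ) := by exact_mod_cast hn
  have hc := hcons 1
  norm_num at hc
  simp only [SameQuadrant, not_or] at hc
  rcases hq2.eq_or_lt with h2 | h3
  · -- q = 2 : then A q - A 1 is the edge vector A 2 - A 1, same quadrant as A 1 - A 0
    rw [← h2] at hv
    exact hc.1 ⟨h0, hv⟩
  · -- q ≥ 3
    have hne1 : ¬ Q1 (A 2 - A 1) := fun h => hc.1 ⟨h0, h⟩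
    have I1 := hdet 0 q le_rfl (by omega) (by omega) (by omega) (by omega) (by omega)
    have I2 := hdet 1 q (by omega) (by omega) (by omega) (by omega) (by omega) (by omega)
    have I3 := hdet 0 2 le_rfl (by omega) (by omega) (by omega) (by omega) (by omega)
    have I4 := hdet q 1 (by omega) (by omega) le_rfl (by omega) (by omega) (by omega)
    norm_num at I1 I2 I3
    simp only [det2, Prod.fst_sub, Prod.snd_sub] at I1 I2 I3 I4
    simp only [Q1, Prod.fst_sub, Prod.snd_sub] at h0 hq hv hne1
    push_neg at hne1
    obtain ⟨h0x, h0y⟩ := h0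
    obtain ⟨hqx, hqy⟩ := hq
    obtain ⟨hvx, hvy⟩ := hv
    -- vy > 0 and ax > 0 from I1
    have hvy' : 0 < (A q).2 - (A 1).2 := by
      nlinarith [mul_nonneg h0y hvx, mul_nonneg h0x hvy]
    have hax : 0 < (A 1).1 - (A 0).1 := by
      nlinarith [mul_nonneg h0y hvx]
    -- vx > 0 from I4
    have hvx' : 0 < (A q).1 - (A 1).1 := by
      nlinarith [mul_nonneg hqx hvy'.le, mul_nonneg hqy hvx]
    -- e1 := A 2 - A 1 is in the open third quadrant
    have hey : (A 2).2 - (A 1).2 < 0 := by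
      by_contra hey
      push_neg at hey
      rcases le_or_gt 0 ((A 2).1 - (A 1).1) with hex | hex
      · exact absurd (hne1 hex) (not_lt.mpr hey)
      · nlinarith [mul_nonneg hey hvx, mul_pos (neg_pos.mpr hex) hvy']
    have hex : (A 2).1 - (A 1).1 < 0 := by
      by_contra hex
      push_neg at hex
      nlinarith [mul_nonneg h0y hex, mul_pos hax (neg_pos.mpr hey)]
    -- final contradiction
    nlinarith [mul_pos (neg_pos.mpr hex) I1, mul_pos hax I2, mul_pos hvx' I3]
end
end

section
/- Let (A_0, A_1, A_2, A_3) be a CPD with 4 vertices (a convex quadrilateral with positively oriented boundary) such that no two consecutive edge vectors A_k - A_{k-1} and A_{k+1} - A_k (indices mod 4) lie in the same closed quadrant. Then the opposite edge vectors A_1 - A_0 and A_3 - A_2 do not lie in the same closed quadrant, and likewise A_2 - A_1 and A_0 - A_3 do not lie in the same closed quadrant. -/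
noncomputable section

lemma cone_lemma (s t : ℝ) (a b c : ℝ × ℝ)
    (ha1 : 0 ≤ s * a.1) (ha2 : 0 ≤ t * a.2) (hc1 : 0 ≤ s * c.1) (hc2 : 0 ≤ t * c.2)
    (hab : 0 < det2 a b) (hbc : 0 < det2 b c) (hac : 0 < det2 a c) :
    0 ≤ s * b.1 ∧ 0 ≤ t * b.2 := by
  have k1 : (s * b.1) * det2 a c = det2 b c * (s * a.1) + det2 a b * (s * c.1) := by
    unfold det2; ring
  have k2 : (t * b.2) * det2 a c = det2 b c * (t * a.2) + det2 a b * (t * c.2) := by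
    unfold det2; ring
  constructor
  · nlinarith [mul_nonneg hbc.le ha1, mul_nonneg hab.le hc1]
  · nlinarith [mul_nonneg hbc.le ha2, mul_nonneg hab.le hc2]

lemma zero_lemma (s t : ℝ) (hs : s * s = 1) (ht : t * t = 1) (a b c : ℝ × ℝ)
    (ha1 : 0 ≤ s * a.1) (ha2 : 0 ≤ t * a.2) (hc1 : 0 ≤ s * c.1) (hc2 : 0 ≤ t * c.2)
    (hab : 0 < det2 a b) (hbc : 0 < det2 b c) (hac : det2 a c = 0) : False := by
  have k1 : det2 b c * (s * a.1) + det2 a b * (s * c.1) = s * b.1 * det2 a c := by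
    unfold det2; ring
  have k2 : det2 b c * (t * a.2) + det2 a b * (t * c.2) = t * b.2 * det2 a c := by
    unfold det2; ring
  rw [hac, mul_zero] at k1 k2
  have e1 : s * a.1 = 0 := by
    have h1 : s * a.1 ≤ 0 := by nlinarith [mul_nonneg hab.le hc1]
    linarith
  have e2 : t * a.2 = 0 := by
    have h2 : t * a.2 ≤ 0 := by nlinarith [mul_nonneg hab.le hc2]
    linarith
  have ea1 : a.1 = 0 := by
    have : a.1 = s * (s * a.1) := by linear_combination (-a.1) * hs
    rw [this, e1, mul_zero]
  have ea2 : a.2 = 0 := by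
    have : a.2 = t * (t * a.2) := by linear_combination (-a.2) * ht
    rw [this, e2, mul_zero]
  simp [det2, ea1, ea2] at hab

lemma contra_lemma (s t : ℝ) (hs : s * s = 1) (ht : t * t = 1) (a b c d : ℝ × ℝ)
    (hab : 0 < det2 a b) (hbc : 0 < det2 b c) (hcd : 0 < det2 c d) (hda : 0 < det2 d a)
    (ha1 : 0 ≤ s * a.1) (ha2 : 0 ≤ t * a.2) (hc1 : 0 ≤ s * c.1) (hc2 : 0 ≤ t * c.2)
    (nb : ¬ (0 ≤ s * b.1 ∧ 0 ≤ t * b.2)) (nd : ¬ (0 ≤ s * d.1 ∧ 0 ≤ t * d.2)) : False := by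
  rcases lt_trichotomy (det2 a c) 0 with h | h | h
  · have hca : 0 < det2 c a := by unfold det2 at *; linarith
    exact nd (cone_lemma s t c d a hc1 hc2 ha1 ha2 hcd hda hca)
  · exact zero_lemma s t hs ht a b c ha1 ha2 hc1 hc2 hab hbc h
  · exact nb (cone_lemma s t a b c ha1 ha2 hc1 hc2 hab hbc h)

lemma not_same_general (a b c d : ℝ × ℝ)
    (hab : 0 < det2 a b) (hbc : 0 < det2 b c) (hcd : 0 < det2 c d) (hda : 0 < det2 d a)
    (nab : ¬ SameQuadrant a b) (ncd : ¬ SameQuadrant c d) :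
    ¬ SameQuadrant a c := by
  intro h
  rcases h with ⟨⟨ha1, ha2⟩, hc1, hc2⟩ | ⟨⟨ha1, ha2⟩, hc1, hc2⟩ |
    ⟨⟨ha1, ha2⟩, hc1, hc2⟩ | ⟨⟨ha1, ha2⟩, hc1, hc2⟩
  · exact contra_lemma 1 1 (by norm_num) (by norm_num) a b c d hab hbc hcd hda
      (by linarith) (by linarith) (by linarith) (by linarith)
      (fun ⟨h1, h2⟩ => nab (Or.inl ⟨⟨ha1, ha2⟩, by constructor <;> linarith⟩))
      (fun ⟨h1, h2⟩ => ncd (Or.inl ⟨⟨hc1, hc2⟩, by constructor <;> linarith⟩))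
  · exact contra_lemma (-1) 1 (by norm_num) (by norm_num) a b c d hab hbc hcd hda
      (by linarith) (by linarith) (by linarith) (by linarith)
      (fun ⟨h1, h2⟩ => nab (Or.inr (Or.inl ⟨⟨ha1, ha2⟩, by constructor <;> linarith⟩)))
      (fun ⟨h1, h2⟩ => ncd (Or.inr (Or.inl ⟨⟨hc1, hc2⟩, by constructor <;> linarith⟩)))
  · exact contra_lemma (-1) (-1) (by norm_num) (by norm_num) a b c d hab hbc hcd hda
      (by linarith) (by linarith) (by linarith) (by linarith)
      (fun ⟨h1, h2⟩ => nab (Or.inr (Or.inr (Or.inl ⟨⟨ha1, ha2⟩, by constructor <;> linarith⟩))))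
      (fun ⟨h1, h2⟩ => ncd (Or.inr (Or.inr (Or.inl ⟨⟨hc1, hc2⟩, by constructor <;> linarith⟩))))
  · exact contra_lemma 1 (-1) (by norm_num) (by norm_num) a b c d hab hbc hcd hda
      (by linarith) (by linarith) (by linarith) (by linarith)
      (fun ⟨h1, h2⟩ => nab (Or.inr (Or.inr (Or.inr ⟨⟨ha1, ha2⟩, by constructor <;> linarith⟩))))
      (fun ⟨h1, h2⟩ => ncd (Or.inr (Or.inr (Or.inr ⟨⟨hc1, hc2⟩, by constructor <;> linarith⟩))))

/-- Third key lemma: in a CPD with 4 vertices in which no two consecutive edge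
vectors lie in the same closed quadrant, the opposite edge vectors never lie in
the same closed quadrant either. -/
theorem quadrilateral_opposite_edges (A : ℤ → ℝ × ℝ) (hA : IsCPD 4 A)
    (hcons : ∀ k : ℤ, ¬ SameQuadrant (A k - A (k - 1)) (A (k + 1) - A k)) :
    ¬ SameQuadrant (A 1 - A 0) (A 3 - A 2) ∧
    ¬ SameQuadrant (A 2 - A 1) (A 0 - A 3) := by
  obtain ⟨-, hper, H⟩ := hA
  have hA4 : A 4 = A 0 := by have := hper 0; norm_num at this; exact this
  have hAm1 : A (-1) = A 3 := by have := hper (-1); norm_num at this; exact this.symm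
  -- edge vectors
  set e0 := A 1 - A 0 with he0
  set e1 := A 2 - A 1 with he1
  set e2 := A 3 - A 2 with he2
  set e3 := A 0 - A 3 with he3
  -- determinant positivity of consecutive edges
  have h02 := H 0 2 (by norm_num) (by norm_num) (by norm_num) (by norm_num)
    (by norm_num) (by norm_num)
  have h13 := H 1 3 (by norm_num) (by norm_num) (by norm_num) (by norm_num)
    (by norm_num) (by norm_num)
  have h32 := H 3 2 (by norm_num) (by norm_num) (by norm_num) (by norm_num)
    (by norm_num) (by norm_num)
  have h31 := H 3 1 (by norm_num) (by norm_num) (by norm_num) (by norm_num)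
    (by norm_num) (by norm_num)
  norm_num [hA4] at h02 h13 h32 h31
  have d01 : 0 < det2 e0 e1 := by
    have : det2 e0 e1 = det2 (A 1 - A 0) (A 2 - A 0) := by simp [he0, he1, det2]; ring
    rw [this]; exact h02
  have d12 : 0 < det2 e1 e2 := by
    have : det2 e1 e2 = det2 (A 2 - A 1) (A 3 - A 1) := by simp [he1, he2, det2]; ring
    rw [this]; exact h13
  have d23 : 0 < det2 e2 e3 := by
    have : det2 e2 e3 = det2 (A 0 - A 3) (A 2 - A 3) := by simp [he2, he3, det2]; ring
    rw [this]; exact h32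
  have d30 : 0 < det2 e3 e0 := by
    have : det2 e3 e0 = det2 (A 0 - A 3) (A 1 - A 3) := by simp [he3, he0, det2]; ring
    rw [this]; exact h31
  -- consecutive not in same quadrant
  have n01 : ¬ SameQuadrant e0 e1 := by have := hcons 1; norm_num at this; exact this
  have n12 : ¬ SameQuadrant e1 e2 := by have := hcons 2; norm_num at this; exact this
  have n23 : ¬ SameQuadrant e2 e3 := by have := hcons 3; norm_num [hA4] at this; exact this
  have n30 : ¬ SameQuadrant e3 e0 := by have := hcons 0; norm_num [hAm1] at this; exact this
  exact ⟨not_same_general e0 e1 e2 e3 d01 d12 d23 d30 n01 n23,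
    not_same_general e1 e2 e3 e0 d12 d23 d30 d01 n12 n30⟩
end
end

section
/- Let (A_k)_{k∈ℤ} be a CPD with n vertices such that for all k, the consecutive edge vectors A_k - A_{k-1} and A_{k+1} - A_k do not lie in the same closed quadrant. Then n ≤ 4. -/
noncomputable section

def rot (v : ℝ × ℝ) : ℝ × ℝ := (v.2, -v.1)

def rotSeq (A : ℤ → ℝ × ℝ) : ℤ → ℝ × ℝ := fun k => rot (A k)

def xmax (A : ℤ → ℝ × ℝ) (k : ℤ) : Prop :=
  0 < (A k).1 - (A (k-1)).1 ∧ (A (k+1)).1 - (A k).1 < 0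

lemma isCPD_rot (n : ℕ) (A : ℤ → ℝ × ℝ) (h : IsCPD n A) : IsCPD n (rotSeq A) := by
  obtain ⟨h1, h2, h3⟩ := h
  refine ⟨h1, fun k => by simp [rotSeq, h2 k], fun p q hp hp' hq hq' hne hne' => ?_⟩
  have h0 := h3 p q hp hp' hq hq' hne hne'
  have e : det2 (rotSeq A (p+1) - rotSeq A p) (rotSeq A q - rotSeq A p)
      = det2 (A (p+1) - A p) (A q - A p) := by
    simp only [rotSeq, rot, det2, Prod.fst_sub, Prod.snd_sub]
    ring
  rw [e]; exact h0

lemma onestep (n : ℕ) (A : ℤ → ℝ × ℝ) (hA : IsCPD n A) (i m : ℤ)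
    (hi1 : 1 ≤ i) (hi2 : i ≤ (n:ℤ) - 1) (hm1 : 1 ≤ m) (hm2 : m ≤ (n:ℤ) - 1)
    (ha : m ≠ i - 1) (hb : m ≠ i) (hc : m ≠ i + 1) (hx : xmax A i) :
    (A m).1 < (A i).1 := by
  obtain ⟨hn3, hper, hdet⟩ := hA
  have hn3' : (3:ℤ) ≤ (n:ℤ) := by exact_mod_cast hn3
  have e1 : i - 1 + 1 = i := by ring
  have hvu : 0 < det2 (A i - A (i-1)) (A (i+1) - A i) := by
    rcases eq_or_lt_of_le hi2 with h | h
    · have h0 := hdet i (i-1) (by omega) (by omega) (by omega) (by omega) (by omega) (by omega)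
      have e : det2 (A i - A (i-1)) (A (i+1) - A i)
          = det2 (A (i+1) - A i) (A (i-1) - A i) := by
        simp only [det2, Prod.fst_sub, Prod.snd_sub]; ring
      rw [e]; exact h0
    · have h0 := hdet (i-1) (i+1) (by omega) (by omega) (by omega) (by omega) (by omega) (by omega)
      rw [e1] at h0
      have e : det2 (A i - A (i-1)) (A (i+1) - A i)
          = det2 (A i - A (i-1)) (A (i+1) - A (i-1)) := by
        simp only [det2, Prod.fst_sub, Prod.snd_sub]; ring
      rw [e]; exact h0
  have hvd := hdet (i-1) m (by omega) (by omega) (by omega) (by omega) (by omega) (by omega)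
  rw [e1] at hvd
  have hud := hdet i m (by omega) (by omega) (by omega) (by omega) (by omega) (by omega)
  simp only [det2, Prod.fst_sub, Prod.snd_sub] at hvu hvd hud
  obtain ⟨hx1, hx2⟩ := hx
  by_contra hcon
  push_neg at hcon
  nlinarith [mul_pos (by linarith : (0:ℝ) < (A i).1 - (A (i+1)).1) hvd,
             mul_pos hx1 hud,
             mul_nonneg hvu.le (by linarith : (0:ℝ) ≤ (A m).1 - (A i).1)]

lemma core (n : ℕ) (A : ℤ → ℝ × ℝ) (hA : IsCPD n A) (i m : ℤ)
    (hi1 : 1 ≤ i) (hi2 : i ≤ (n:ℤ) - 1) (hm1 : 1 ≤ m) (hm2 : m ≤ (n:ℤ) - 1)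
    (hne : i ≠ m) (hxi : xmax A i) (hxm : xmax A m) : False := by
  rcases eq_or_ne m (i+1) with h | h
  · subst h
    have h1 := hxm.1
    rw [show i + 1 - 1 = i from by ring] at h1
    linarith [hxi.2]
  rcases eq_or_ne m (i-1) with h2 | h2
  · subst h2
    have h3 := hxm.2
    rw [show i - 1 + 1 = i from by ring] at h3
    linarith [hxi.1]
  · have a := onestep n A hA i m hi1 hi2 hm1 hm2 h2 (Ne.symm hne) h hxi
    have b := onestep n A hA m i hm1 hm2 hi1 hi2 (by omega) hne (by omega) hxm
    linarith

lemma extra2 (A : ℤ → ℝ × ℝ) (hA : IsCPD 5 A) : 0 < det2 (A 3 - A 2) (A 0 - A 2) := by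
  obtain ⟨-, hper, hdet⟩ := hA
  have hA5 : A 5 = A 0 := by simpa using hper 0
  have h6 := hdet 2 1 (by norm_num) (by norm_num) (by norm_num) (by norm_num) (by norm_num) (by norm_num)
  have h7 := hdet 2 4 (by norm_num) (by norm_num) (by norm_num) (by norm_num) (by norm_num) (by norm_num)
  have h8 := hdet 3 1 (by norm_num) (by norm_num) (by norm_num) (by norm_num) (by norm_num) (by norm_num)
  have h2' := hdet 0 3 (by norm_num) (by norm_num) (by norm_num) (by norm_num) (by norm_num) (by norm_num)
  have hC := hdet 4 3 (by norm_num) (by norm_num) (by norm_num) (by norm_num) (by norm_num) (by norm_num)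
  norm_num at h6 h7 h8 h2' hC
  rw [hA5] at hC
  have key : det2 (A 4 - A 3) (A 1 - A 3) * det2 (A 3 - A 2) (A 0 - A 2)
      = det2 (A 0 - A 4) (A 3 - A 4) * det2 (A 3 - A 2) (A 1 - A 2)
        + det2 (A 1 - A 0) (A 3 - A 0) * det2 (A 3 - A 2) (A 4 - A 2) := by
    simp only [det2, Prod.fst_sub, Prod.snd_sub]; ring
  by_contra hg
  push_neg at hg
  nlinarith [mul_pos hC h6, mul_pos h2' h7, mul_nonneg h8.le (neg_nonneg.2 hg), key]

lemma core5 (A : ℤ → ℝ × ℝ) (hA : IsCPD 5 A) (i : ℤ) (hi : 1 ≤ i) (hi4 : i ≤ 4)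
    (hxi : xmax A i) (hx5 : xmax A 5) : False := by
  have hex := extra2 A hA
  obtain ⟨-, hper, hdet⟩ := hA
  have hA5 : A 5 = A 0 := by simpa using hper 0
  have hA6 : A 6 = A 1 := by simpa using hper 1
  obtain ⟨hv5, hu5⟩ := hx5
  norm_num at hv5 hu5
  rw [hA5] at hv5
  rw [hA6, hA5] at hu5
  -- hv5 : 0 < (A 0).1 - (A 4).1 ; hu5 : (A 1).1 - (A 0).1 < 0
  have g1 := hdet 0 2 (by norm_num) (by norm_num) (by norm_num) (by norm_num) (by norm_num) (by norm_num)
  have g41 := hdet 4 1 (by norm_num) (by norm_num) (by norm_num) (by norm_num) (by norm_num) (by norm_num)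
  norm_num at g1 g41
  rw [hA5] at g41
  interval_cases i
  · obtain ⟨h1, -⟩ := hxi
    norm_num at h1
    linarith
  · obtain ⟨hxi1, hxi2⟩ := hxi
    norm_num at hxi1 hxi2
    have g2 := hdet 1 3 (by norm_num) (by norm_num) (by norm_num) (by norm_num) (by norm_num) (by norm_num)
    have g42 := hdet 4 2 (by norm_num) (by norm_num) (by norm_num) (by norm_num) (by norm_num) (by norm_num)
    norm_num at g2 g42
    rw [hA5] at g42
    simp only [det2, Prod.fst_sub, Prod.snd_sub] at g1 g2 g42 g41 hex
    have dir1 : (A 0).1 < (A 2).1 := by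
      by_contra hcon; push_neg at hcon
      nlinarith [mul_pos (by linarith : (0:ℝ) < (A 2).1 - (A 3).1) g1,
                 mul_pos (sub_pos.mpr hxi1) hex,
                 mul_nonneg g2.le (by linarith : (0:ℝ) ≤ (A 0).1 - (A 2).1)]
    have dir2 : (A 2).1 < (A 0).1 := by
      by_contra hcon; push_neg at hcon
      nlinarith [mul_pos (by linarith : (0:ℝ) < (A 0).1 - (A 1).1) g42,
                 mul_pos (sub_pos.mpr hv5) g1,
                 mul_nonneg g41.le (by linarith : (0:ℝ) ≤ (A 2).1 - (A 0).1)]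
    linarith
  · obtain ⟨hxi1, hxi2⟩ := hxi
    norm_num at hxi1 hxi2
    have g43 := hdet 4 3 (by norm_num) (by norm_num) (by norm_num) (by norm_num) (by norm_num) (by norm_num)
    have g24 := hdet 2 4 (by norm_num) (by norm_num) (by norm_num) (by norm_num) (by norm_num) (by norm_num)
    have g03 := hdet 0 3 (by norm_num) (by norm_num) (by norm_num) (by norm_num) (by norm_num) (by norm_num)
    norm_num at g43 g24 g03
    rw [hA5] at g43
    simp only [det2, Prod.fst_sub, Prod.snd_sub] at g43 g24 g03 g41 hex
    have dir1 : (A 0).1 < (A 3).1 := by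
      by_contra hcon; push_neg at hcon
      nlinarith [mul_pos (by linarith : (0:ℝ) < (A 3).1 - (A 4).1) hex,
                 mul_pos (sub_pos.mpr hxi1) g43,
                 mul_nonneg g24.le (by linarith : (0:ℝ) ≤ (A 0).1 - (A 3).1)]
    have dir2 : (A 3).1 < (A 0).1 := by
      by_contra hcon; push_neg at hcon
      nlinarith [mul_pos (by linarith : (0:ℝ) < (A 0).1 - (A 1).1) g43,
                 mul_pos (sub_pos.mpr hv5) g03,
                 mul_nonneg g41.le (by linarith : (0:ℝ) ≤ (A 3).1 - (A 0).1)]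
    linarith
  · obtain ⟨-, h2⟩ := hxi
    norm_num at h2
    rw [hA5] at h2
    linarith

lemma quad (v w : ℝ × ℝ) (h : ¬ SameQuadrant v w) :
    (0 < v.1 ∧ w.1 < 0) ∨ (0 < v.2 ∧ w.2 < 0) ∨
    (0 < -v.1 ∧ -w.1 < 0) ∨ (0 < -v.2 ∧ -w.2 < 0) := by
  by_contra hc
  push_neg at hc
  obtain ⟨c1, c2, c3, c4⟩ := hc
  apply h
  have hx : (0 ≤ v.1 ∧ 0 ≤ w.1) ∨ (v.1 ≤ 0 ∧ w.1 ≤ 0) := by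
    rcases lt_trichotomy v.1 0 with h' | h' | h'
    · right; refine ⟨h'.le, ?_⟩
      have := c3 (by linarith); linarith
    · rcases le_total 0 w.1 with h'' | h''
      · left; exact ⟨le_of_eq h'.symm, h''⟩
      · right; exact ⟨le_of_eq h', h''⟩
    · left; exact ⟨h'.le, c1 h'⟩
  have hy : (0 ≤ v.2 ∧ 0 ≤ w.2) ∨ (v.2 ≤ 0 ∧ w.2 ≤ 0) := by
    rcases lt_trichotomy v.2 0 with h' | h' | h'
    · right; refine ⟨h'.le, ?_⟩
      have := c4 (by linarith); linarith
    · rcases le_total 0 w.2 with h'' | h''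
      · left; exact ⟨le_of_eq h'.symm, h''⟩
      · right; exact ⟨le_of_eq h', h''⟩
    · left; exact ⟨h'.le, c2 h'⟩
  unfold SameQuadrant Q1 Q2 Q3 Q4
  rcases hx with ⟨a1, a2⟩ | ⟨a1, a2⟩ <;> rcases hy with ⟨b1, b2⟩ | ⟨b1, b2⟩
  · exact Or.inl ⟨⟨a1, b1⟩, ⟨a2, b2⟩⟩
  · exact Or.inr (Or.inr (Or.inr ⟨⟨a1, b1⟩, ⟨a2, b2⟩⟩))
  · exact Or.inr (Or.inl ⟨⟨a1, b1⟩, ⟨a2, b2⟩⟩)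
  · exact Or.inr (Or.inr (Or.inl ⟨⟨a1, b1⟩, ⟨a2, b2⟩⟩))

open Classical in
noncomputable def qix (A : ℤ → ℝ × ℝ) (k : ℤ) : ℕ :=
  if xmax A k then 0 else if xmax (rotSeq A) k then 1
  else if xmax (rotSeq (rotSeq A)) k then 2 else 3

lemma qix_lt (A : ℤ → ℝ × ℝ) (k : ℤ) : qix A k < 4 := by
  unfold qix; split_ifs <;> norm_num

lemma qix0 (A : ℤ → ℝ × ℝ) (k : ℤ) (h : qix A k = 0) : xmax A k := by
  unfold qix at h; split_ifs at h with h1 h2 h3 <;> first | assumption | omega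

lemma qix1 (A : ℤ → ℝ × ℝ) (k : ℤ) (h : qix A k = 1) : xmax (rotSeq A) k := by
  unfold qix at h; split_ifs at h with h1 h2 h3 <;> first | assumption | omega

lemma qix2 (A : ℤ → ℝ × ℝ) (k : ℤ) (h : qix A k = 2) : xmax (rotSeq (rotSeq A)) k := by
  unfold qix at h; split_ifs at h with h1 h2 h3 <;> first | assumption | omega

lemma qix3 (A : ℤ → ℝ × ℝ) (k : ℤ) (h : qix A k = 3)
    (he : xmax A k ∨ xmax (rotSeq A) k ∨ xmax (rotSeq (rotSeq A)) k ∨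
      xmax (rotSeq (rotSeq (rotSeq A))) k) : xmax (rotSeq (rotSeq (rotSeq A))) k := by
  unfold qix at h; split_ifs at h with h1 h2 h3 <;> first | omega | tauto


/-- Main theorem on CPDs: if no two consecutive edge vectors of a CPD with `n`
vertices lie in the same closed quadrant, then `n ≤ 4`. -/
theorem CPD_le_four (n : ℕ) (A : ℤ → ℝ × ℝ) (hA : IsCPD n A)
    (hcons : ∀ k : ℤ, ¬ SameQuadrant (A k - A (k - 1)) (A (k + 1) - A k)) :
    n ≤ 4 := by
  classical
  by_contra hle
  push_neg at hle
  have hev : ∀ k : ℤ, xmax A k ∨ xmax (rotSeq A) k ∨ xmax (rotSeq (rotSeq A)) k ∨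
      xmax (rotSeq (rotSeq (rotSeq A))) k := by
    intro k
    have h := quad _ _ (hcons k)
    simp only [Prod.fst_sub, Prod.snd_sub] at h
    rcases h with ⟨h1, h2⟩ | ⟨h1, h2⟩ | ⟨h1, h2⟩ | ⟨h1, h2⟩
    · exact Or.inl ⟨h1, h2⟩
    · refine Or.inr (Or.inl ⟨?_, ?_⟩) <;> simp only [rotSeq, rot] <;> linarith
    · refine Or.inr (Or.inr (Or.inl ⟨?_, ?_⟩)) <;> simp only [rotSeq, rot] <;> linarith
    · refine Or.inr (Or.inr (Or.inr ⟨?_, ?_⟩)) <;> simp only [rotSeq, rot] <;> linarith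
  have hB1 := isCPD_rot n A hA
  have hB2 := isCPD_rot n _ hB1
  have hB3 := isCPD_rot n _ hB2
  rcases (by omega : 6 ≤ n ∨ n = 5) with h6 | h5
  · obtain ⟨i, hi, m, hm, hne, heq⟩ :=
      Finset.exists_ne_map_eq_of_card_lt_of_maps_to
        (s := Finset.Icc (1:ℤ) ((n:ℤ)-1)) (t := Finset.range 4)
        (by rw [Finset.card_range, Int.card_Icc]; omega)
        (fun a _ => Finset.mem_range.mpr (qix_lt A a))
    rw [Finset.mem_Icc] at hi hm
    have h4 : qix A i = 0 ∨ qix A i = 1 ∨ qix A i = 2 ∨ qix A i = 3 := by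
      have := qix_lt A i; omega
    rcases h4 with h | h | h | h
    · exact core n A hA i m hi.1 hi.2 hm.1 hm.2 hne (qix0 A i h) (qix0 A m (heq.symm.trans h))
    · exact core n _ hB1 i m hi.1 hi.2 hm.1 hm.2 hne (qix1 A i h) (qix1 A m (heq.symm.trans h))
    · exact core n _ hB2 i m hi.1 hi.2 hm.1 hm.2 hne (qix2 A i h) (qix2 A m (heq.symm.trans h))
    · exact core n _ hB3 i m hi.1 hi.2 hm.1 hm.2 hne (qix3 A i h (hev i))
        (qix3 A m (heq.symm.trans h) (hev m))
  · subst h5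
    have key5 : ∀ (B : ℤ → ℝ × ℝ), IsCPD 5 B → ∀ i m : ℤ, 1 ≤ i → i ≤ 5 → 1 ≤ m → m ≤ 5 →
        i ≠ m → xmax B i → xmax B m → False := by
      intro B hB i m a b c d e f g
      rcases eq_or_ne m 5 with rfl | hm5
      · exact core5 B hB i a (by omega) f g
      · rcases eq_or_ne i 5 with rfl | hi5
        · exact core5 B hB m c (by omega) g f
        · exact core 5 B hB i m a (by push_cast; omega) c (by push_cast; omega) e f g
    obtain ⟨i, hi, m, hm, hne, heq⟩ :=
      Finset.exists_ne_map_eq_of_card_lt_of_maps_to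
        (s := Finset.Icc (1:ℤ) 5) (t := Finset.range 4)
        (by rw [Finset.card_range, Int.card_Icc]; omega)
        (fun a _ => Finset.mem_range.mpr (qix_lt A a))
    rw [Finset.mem_Icc] at hi hm
    have h4 : qix A i = 0 ∨ qix A i = 1 ∨ qix A i = 2 ∨ qix A i = 3 := by
      have := qix_lt A i; omega
    rcases h4 with h | h | h | h
    · exact key5 A hA i m hi.1 hi.2 hm.1 hm.2 hne (qix0 A i h) (qix0 A m (heq.symm.trans h))
    · exact key5 _ hB1 i m hi.1 hi.2 hm.1 hm.2 hne (qix1 A i h) (qix1 A m (heq.symm.trans h))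
    · exact key5 _ hB2 i m hi.1 hi.2 hm.1 hm.2 hne (qix2 A i h) (qix2 A m (heq.symm.trans h))
    · exact key5 _ hB3 i m hi.1 hi.2 hm.1 hm.2 hne (qix3 A i h (hev i))
        (qix3 A m (heq.symm.trans h) (hev m))
end
end

section
/- Lemma of the three points: Let A, B, C be three distinct non-collinear points of the unit square [0,1]² such that the vectors B - A and C - B lie in the same closed quadrant, and such that the lines (A,B) and (B,C) belong to D_{m,n}. Then there exists a line D ∈ D_{m,n} with equation φ(M) = 0 passing through B such that φ(A)·φ(C) < 0 (i.e., D separates A and C). -/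
noncomputable section

lemma perp_decomp (x y u v : ℝ) (hd : x ≠ 0 ∨ y ≠ 0) (h : u * x + v * y = 0) :
    ∃ l : ℝ, u = -l * y ∧ v = l * x := by
  by_cases hx : x = 0
  · have hy : y ≠ 0 := hd.resolve_left (by simp [hx])
    refine ⟨-u / y, ?_, ?_⟩
    · field_simp
    · have : v * y = 0 := by rw [hx] at h; linarith
      have hv : v = 0 := by
        rcases mul_eq_zero.mp this with h' | h'
        · exact h'
        · exact absurd h' hy
      simp [hv, hx]
  · refine ⟨v / x, ?_, ?_⟩
    · have : u * x = -(v * y) := by linarith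
      field_simp
      nlinarith [this]
    · field_simp

lemma key_lemma (m n : ℕ) (A B C : ℝ × ℝ) (hB : B ∈ unitSquare)
    (u₁ v₁ w₁ u₂ v₂ w₂ : ℤ)
    (hu1 : |u₁| ≤ (m : ℤ)) (hv1 : |v₁| ≤ (n : ℤ))
    (hu2 : |u₂| ≤ (m : ℤ)) (hv2 : |v₂| ≤ (n : ℤ))
    (h1B : (u₁ : ℝ) * B.1 + (v₁ : ℝ) * B.2 = (w₁ : ℝ))
    (h2B : (u₂ : ℝ) * B.1 + (v₂ : ℝ) * B.2 = (w₂ : ℝ))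
    (h2C : (u₂ : ℝ) * C.1 + (v₂ : ℝ) * C.2 = (w₂ : ℝ))
    (lam₁ lam₂ : ℝ)
    (hU1 : (u₁ : ℝ) = -lam₁ * (B.2 - A.2)) (hV1 : (v₁ : ℝ) = lam₁ * (B.1 - A.1))
    (hU2 : (u₂ : ℝ) = -lam₂ * (C.2 - B.2)) (hV2 : (v₂ : ℝ) = lam₂ * (C.1 - B.1))
    (hlam : 0 < lam₁ * lam₂)
    (hD : (B.1 - A.1) * (C.2 - B.2) - (B.2 - A.2) * (C.1 - B.1) ≠ 0)
    (hq1 : 0 ≤ (B.1 - A.1) * (C.1 - B.1)) (hq2 : 0 ≤ (B.2 - A.2) * (C.2 - B.2)) :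
    ∃ u v w : ℤ, |u| ≤ (m : ℤ) ∧ |v| ≤ (n : ℤ) ∧ (u, v) ≠ (0, 0) ∧
      IsFareyLine m n {p : ℝ × ℝ | (u : ℝ) * p.1 + (v : ℝ) * p.2 = (w : ℝ)} ∧
      (u : ℝ) * B.1 + (v : ℝ) * B.2 = (w : ℝ) ∧
      ((u : ℝ) * A.1 + (v : ℝ) * A.2 - w) *
        ((u : ℝ) * C.1 + (v : ℝ) * C.2 - w) < 0 := by
  set D : ℝ := (B.1 - A.1) * (C.2 - B.2) - (B.2 - A.2) * (C.1 - B.1) with hDdef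
  have hu : |u₁ - u₂| ≤ (m : ℤ) := by
    have hr : (0 : ℝ) ≤ (u₁ : ℝ) * (u₂ : ℝ) := by
      rw [hU1, hU2]
      nlinarith [mul_nonneg hlam.le hq2]
    have hz : (0 : ℤ) ≤ u₁ * u₂ := by exact_mod_cast hr
    rw [abs_le] at hu1 hu2 ⊢
    rcases mul_nonneg_iff.mp hz with ⟨h1, h2⟩ | ⟨h1, h2⟩ <;> omega
  have hv : |v₁ - v₂| ≤ (n : ℤ) := by
    have hr : (0 : ℝ) ≤ (v₁ : ℝ) * (v₂ : ℝ) := by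
      rw [hV1, hV2]
      nlinarith [mul_nonneg hlam.le hq1]
    have hz : (0 : ℤ) ≤ v₁ * v₂ := by exact_mod_cast hr
    rw [abs_le] at hv1 hv2 ⊢
    rcases mul_nonneg_iff.mp hz with ⟨h1, h2⟩ | ⟨h1, h2⟩ <;> omega
  have hgA : ((u₁ - u₂ : ℤ) : ℝ) * A.1 + ((v₁ - v₂ : ℤ) : ℝ) * A.2 - ((w₁ - w₂ : ℤ) : ℝ)
      = -(lam₂ * D) := by
    push_cast
    rw [← h1B, ← h2B, hU1, hV1, hU2, hV2, hDdef]
    ring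
  have hgC : ((u₁ - u₂ : ℤ) : ℝ) * C.1 + ((v₁ - v₂ : ℤ) : ℝ) * C.2 - ((w₁ - w₂ : ℤ) : ℝ)
      = lam₁ * D := by
    push_cast
    rw [← h1B, ← h2C, hU1, hV1, hDdef]
    ring
  have hprod : (((u₁ - u₂ : ℤ) : ℝ) * A.1 + ((v₁ - v₂ : ℤ) : ℝ) * A.2 - ((w₁ - w₂ : ℤ) : ℝ)) *
      (((u₁ - u₂ : ℤ) : ℝ) * C.1 + ((v₁ - v₂ : ℤ) : ℝ) * C.2 - ((w₁ - w₂ : ℤ) : ℝ)) < 0 := by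
    rw [hgA, hgC]
    have hD2 : 0 < D * D := mul_self_pos.mpr hD
    nlinarith [mul_pos hlam hD2]
  have hBeq : ((u₁ - u₂ : ℤ) : ℝ) * B.1 + ((v₁ - v₂ : ℤ) : ℝ) * B.2 = ((w₁ - w₂ : ℤ) : ℝ) := by
    push_cast
    linarith [h1B, h2B]
  have hne : ((u₁ - u₂ : ℤ), (v₁ - v₂ : ℤ)) ≠ ((0 : ℤ), (0 : ℤ)) := by
    intro h
    rw [Prod.mk.injEq] at h
    obtain ⟨h1, h2⟩ := h
    rw [h1, h2] at hprod
    push_cast at hprod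
    nlinarith [hprod, sq_nonneg ((w₁ : ℝ) - w₂)]
  exact ⟨u₁ - u₂, v₁ - v₂, w₁ - w₂, hu, hv, hne,
    ⟨⟨B, hBeq, hB⟩, u₁ - u₂, v₁ - v₂, w₁ - w₂, hu, hv, hne, rfl⟩, hBeq, hprod⟩

set_option maxHeartbeats 1000000 in
/-- Lemma of the three points: if `A`, `B`, `C` are distinct non-collinear
points of the unit square with `B - A` and `C - B` in the same closed quadrant,
and the lines `(A,B)` and `(B,C)` belong to `D_{m,n}`, then some line of
`D_{m,n}` passes through `B` and strictly separates `A` from `C`. -/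
theorem three_points_lemma (m n : ℕ) (hm : 0 < m) (hn : 0 < n)
    (A B C : ℝ × ℝ) (hA : A ∈ unitSquare) (hB : B ∈ unitSquare)
    (hC : C ∈ unitSquare) (hAB : A ≠ B) (hBC : B ≠ C) (hAC : A ≠ C)
    (hncol : det2 (B - A) (C - A) ≠ 0)
    (hquad : SameQuadrant (B - A) (C - B))
    (hlAB : IsFareyLine m n {p : ℝ × ℝ | det2 (B - A) (p - A) = 0})
    (hlBC : IsFareyLine m n {p : ℝ × ℝ | det2 (C - B) (p - B) = 0}) :
    ∃ u v w : ℤ, |u| ≤ (m : ℤ) ∧ |v| ≤ (n : ℤ) ∧ (u, v) ≠ (0, 0) ∧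
      IsFareyLine m n {p : ℝ × ℝ | (u : ℝ) * p.1 + (v : ℝ) * p.2 = (w : ℝ)} ∧
      (u : ℝ) * B.1 + (v : ℝ) * B.2 = (w : ℝ) ∧
      ((u : ℝ) * A.1 + (v : ℝ) * A.2 - w) *
        ((u : ℝ) * C.1 + (v : ℝ) * C.2 - w) < 0 := by
  obtain ⟨-, u₁, v₁, w₁, hu1, hv1, hne1, heq1⟩ := hlAB
  obtain ⟨-, u₂, v₂, w₂, hu2, hv2, hne2, heq2⟩ := hlBC
  -- point memberships
  have memA : A ∈ {p : ℝ × ℝ | det2 (B - A) (p - A) = 0} := by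
    show det2 (B - A) (A - A) = 0; simp [det2]
  have memB1 : B ∈ {p : ℝ × ℝ | det2 (B - A) (p - A) = 0} := by
    show det2 (B - A) (B - A) = 0; unfold det2; ring
  have memB2 : B ∈ {p : ℝ × ℝ | det2 (C - B) (p - B) = 0} := by
    show det2 (C - B) (B - B) = 0; simp [det2]
  have memC : C ∈ {p : ℝ × ℝ | det2 (C - B) (p - B) = 0} := by
    show det2 (C - B) (C - B) = 0; unfold det2; ring
  rw [heq1] at memA memB1
  rw [heq2] at memB2 memC
  have h1A : (u₁ : ℝ) * A.1 + (v₁ : ℝ) * A.2 = (w₁ : ℝ) := memA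
  have h1B : (u₁ : ℝ) * B.1 + (v₁ : ℝ) * B.2 = (w₁ : ℝ) := memB1
  have h2B : (u₂ : ℝ) * B.1 + (v₂ : ℝ) * B.2 = (w₂ : ℝ) := memB2
  have h2C : (u₂ : ℝ) * C.1 + (v₂ : ℝ) * C.2 = (w₂ : ℝ) := memC
  -- orthogonality
  have horth1 : (u₁ : ℝ) * (B.1 - A.1) + (v₁ : ℝ) * (B.2 - A.2) = 0 := by
    linear_combination h1B - h1A
  have horth2 : (u₂ : ℝ) * (C.1 - B.1) + (v₂ : ℝ) * (C.2 - B.2) = 0 := by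
    linear_combination h2C - h2B
  have hd1 : B.1 - A.1 ≠ 0 ∨ B.2 - A.2 ≠ 0 := by
    by_contra h
    push_neg at h
    exact hAB (Prod.ext (by linarith [h.1]) (by linarith [h.2]))
  have hd2 : C.1 - B.1 ≠ 0 ∨ C.2 - B.2 ≠ 0 := by
    by_contra h
    push_neg at h
    exact hBC (Prod.ext (by linarith [h.1]) (by linarith [h.2]))
  obtain ⟨lam₁, hU1, hV1⟩ := perp_decomp _ _ _ _ hd1 horth1
  obtain ⟨lam₂, hU2, hV2⟩ := perp_decomp _ _ _ _ hd2 horth2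
  have hlam1 : lam₁ ≠ 0 := by
    intro h
    apply hne1
    rw [Prod.mk.injEq]
    constructor <;> [skip; skip] <;>
      · have := hU1; have := hV1
        rw [h] at hU1 hV1
        simp at hU1 hV1
        first
        | exact_mod_cast hU1
        | exact_mod_cast hV1
  have hlam2 : lam₂ ≠ 0 := by
    intro h
    apply hne2
    rw [Prod.mk.injEq]
    constructor <;>
      · rw [h] at hU2 hV2
        simp at hU2 hV2
        first
        | exact_mod_cast hU2
        | exact_mod_cast hV2
  have hD : (B.1 - A.1) * (C.2 - B.2) - (B.2 - A.2) * (C.1 - B.1) ≠ 0 := by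
    intro h
    apply hncol
    show (B - A).1 * (C - A).2 - (B - A).2 * (C - A).1 = 0
    simp only [Prod.fst_sub, Prod.snd_sub]
    linear_combination h
  have hq : (0 ≤ (B.1 - A.1) * (C.1 - B.1)) ∧ (0 ≤ (B.2 - A.2) * (C.2 - B.2)) := by
    rcases hquad with ⟨⟨a, b⟩, c, d⟩ | ⟨⟨a, b⟩, c, d⟩ | ⟨⟨a, b⟩, c, d⟩ | ⟨⟨a, b⟩, c, d⟩ <;>
      simp only [Q1, Q2, Q3, Q4, Prod.fst_sub, Prod.snd_sub] at a b c d <;>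
      constructor <;>
      first
      | exact mul_nonneg a c
      | exact mul_nonneg b d
      | exact mul_nonneg_iff.mpr (Or.inr ⟨a, c⟩)
      | exact mul_nonneg_iff.mpr (Or.inr ⟨b, d⟩)
  obtain ⟨hq1, hq2⟩ := hq
  rcases lt_or_gt_of_ne (mul_ne_zero hlam1 hlam2) with hneg | hpos
  · -- flip the second line
    refine key_lemma m n A B C hB u₁ v₁ w₁ (-u₂) (-v₂) (-w₂) hu1 hv1 ?_ ?_ h1B ?_ ?_
      lam₁ (-lam₂) hU1 hV1 ?_ ?_ ?_ hD hq1 hq2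
    · rwa [abs_neg]
    · rwa [abs_neg]
    · push_cast; linarith [h2B]
    · push_cast; linarith [h2C]
    · push_cast; linarith [hU2]
    · push_cast; linarith [hV2]
    · nlinarith
  · exact key_lemma m n A B C hB u₁ v₁ w₁ u₂ v₂ w₂ hu1 hv1 hu2 hv2 h1B h2B h2C
      lam₁ lam₂ hU1 hV1 hU2 hV2 hpos hD hq1 hq2
end
end

section
/- Let A, B, C be distinct non-collinear points in [0,1]² with B - A and C - B both in the first closed quadrant (so x_A ≤ x_B ≤ x_C and y_A ≤ y_B ≤ y_C). Suppose lines (A,B) and (B,C) have integer equations f(x,y) = ux + vy - w and f'(x,y) = u'x + v'y - w' respectively with u, u' ≤ 0 and v, v' ≥ 0, |u|, |u'| ≤ m, |v|, |v'| ≤ n, normalized so that f is a positive multiple of M ↦ det(B - A, M - A) and f' a positive multiple of M ↦ det(C - B, M - B). Then φ = f - f' vanishes at B, satisfies φ(A)·φ(C) < 0, and its linear part (u - u', v - v') satisfies |u - u'| ≤ m, |v - v'| ≤ n and (u - u', v - v') ≠ (0,0). -/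
noncomputable section

/-- Explicit form of the separating line in the lemma of the three points:
with normalized equations `f` of `(A,B)` and `f'` of `(B,C)`, the difference
`φ = f - f'` vanishes at `B`, separates `A` from `C`, and has admissible
integer coefficients. -/
theorem three_points_explicit (m n : ℕ) (hm : 0 < m) (hn : 0 < n)
    (A B C : ℝ × ℝ) (hA : A ∈ unitSquare) (hB : B ∈ unitSquare)
    (hC : C ∈ unitSquare) (hAB : A ≠ B) (hBC : B ≠ C) (hAC : A ≠ C)
    (hncol : det2 (B - A) (C - A) ≠ 0)
    (hq1 : Q1 (B - A)) (hq2 : Q1 (C - B))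
    (u v w u' v' w' : ℤ)
    (hu : u ≤ 0) (hv : 0 ≤ v) (hu' : u' ≤ 0) (hv' : 0 ≤ v')
    (hum : |u| ≤ (m : ℤ)) (hvn : |v| ≤ (n : ℤ))
    (hu'm : |u'| ≤ (m : ℤ)) (hv'n : |v'| ≤ (n : ℤ))
    (hf : ∃ c : ℝ, 0 < c ∧ ∀ p : ℝ × ℝ,
      (u : ℝ) * p.1 + (v : ℝ) * p.2 - (w : ℝ) = c * det2 (B - A) (p - A))
    (hf' : ∃ c : ℝ, 0 < c ∧ ∀ p : ℝ × ℝ,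
      (u' : ℝ) * p.1 + (v' : ℝ) * p.2 - (w' : ℝ) = c * det2 (C - B) (p - B)) :
    (((u - u' : ℤ) : ℝ) * B.1 + ((v - v' : ℤ) : ℝ) * B.2 - ((w - w' : ℤ) : ℝ) = 0) ∧
    (((u - u' : ℤ) : ℝ) * A.1 + ((v - v' : ℤ) : ℝ) * A.2 - ((w - w' : ℤ) : ℝ)) *
      (((u - u' : ℤ) : ℝ) * C.1 + ((v - v' : ℤ) : ℝ) * C.2 - ((w - w' : ℤ) : ℝ)) < 0 ∧
    |u - u'| ≤ (m : ℤ) ∧ |v - v'| ≤ (n : ℤ) ∧ (u - u', v - v') ≠ (0, 0) := by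
  obtain ⟨c, hc, hfc⟩ := hf
  obtain ⟨c', hc', hfc'⟩ := hf'
  set d := det2 (B - A) (C - A) with hd
  have hB1 : (u : ℝ) * B.1 + v * B.2 - w = 0 := by
    rw [hfc B]; simp only [det2, Prod.fst_sub, Prod.snd_sub]; ring
  have hB2 : (u' : ℝ) * B.1 + v' * B.2 - w' = 0 := by
    rw [hfc' B]; simp only [det2, Prod.fst_sub, Prod.snd_sub]; ring
  have hA1 : (u : ℝ) * A.1 + v * A.2 - w = 0 := by
    rw [hfc A]; simp only [det2, Prod.fst_sub, Prod.snd_sub]; ring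
  have hA2 : (u' : ℝ) * A.1 + v' * A.2 - w' = c' * d := by
    rw [hfc' A, hd]; simp only [det2, Prod.fst_sub, Prod.snd_sub]; ring
  have hC1 : (u : ℝ) * C.1 + v * C.2 - w = c * d := by
    rw [hfc C]
  have hC2 : (u' : ℝ) * C.1 + v' * C.2 - w' = 0 := by
    rw [hfc' C]; simp only [det2, Prod.fst_sub, Prod.snd_sub]; ring
  have eA : ((u : ℝ) - u') * A.1 + ((v : ℝ) - v') * A.2 - ((w : ℝ) - w') = -(c' * d) := by
    linear_combination hA1 - hA2
  have eC : ((u : ℝ) - u') * C.1 + ((v : ℝ) - v') * C.2 - ((w : ℝ) - w') = c * d := by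
    linear_combination hC1 - hC2
  have hd2 : 0 < d ^ 2 := (sq_nonneg d).lt_of_ne' (pow_ne_zero 2 hncol)
  have hprod : (((u - u' : ℤ) : ℝ) * A.1 + ((v - v' : ℤ) : ℝ) * A.2 - ((w - w' : ℤ) : ℝ)) *
      (((u - u' : ℤ) : ℝ) * C.1 + ((v - v' : ℤ) : ℝ) * C.2 - ((w - w' : ℤ) : ℝ)) < 0 := by
    push_cast
    rw [eA, eC]
    nlinarith [mul_pos (mul_pos hc hc') hd2]
  refine ⟨by push_cast; linear_combination hB1 - hB2, hprod, ?_, ?_, ?_⟩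
  · have h1 := abs_le.mp hum; have h2 := abs_le.mp hu'm
    rw [abs_le]; omega
  · have h1 := abs_le.mp hvn; have h2 := abs_le.mp hv'n
    rw [abs_le]; omega
  · intro h
    rw [Prod.mk.injEq] at h
    obtain ⟨h1, h2⟩ := h
    rw [h1, h2] at hprod
    push_cast at hprod
    nlinarith [sq_nonneg ((w : ℝ) - w')]
end
end

section
/- Theorem (Tajine–Daurat): For all positive integers m, n, the closure of every connected component of the Farey complex CF(m,n) is a triangle or a quadrilateral (i.e., a convex polygon with 3 or 4 vertices). -/
noncomputable section

namespace TD


/-- dot product -/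
def dot (v w : ℝ × ℝ) : ℝ := v.1 * w.1 + v.2 * w.2

/-- rotation by 90 degrees -/
def rot (v : ℝ × ℝ) : ℝ × ℝ := (-v.2, v.1)

lemma dot_comm (v w : ℝ × ℝ) : dot v w = dot w v := by simp [dot]; ring

lemma dot_rot (v w : ℝ × ℝ) : dot w (rot v) = det2 v w := by simp [dot, rot, det2]; ring

lemma dot_smul_left (μ : ℝ) (v w : ℝ × ℝ) : dot (μ • v) w = μ * dot v w := by
  simp [dot, Prod.smul_fst, Prod.smul_snd, smul_eq_mul]; ring

lemma dot_sub_right (v p q : ℝ × ℝ) : dot v (p - q) = dot v p - dot v q := by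
  simp [dot, Prod.fst_sub, Prod.snd_sub]; ring

lemma dot_smul_right (μ : ℝ) (v w : ℝ × ℝ) : dot v (μ • w) = μ * dot v w := by
  simp [dot, Prod.smul_fst, Prod.smul_snd, smul_eq_mul]; ring

lemma dot_neg_right (v w : ℝ × ℝ) : dot v (-w) = -dot v w := by
  simp [dot]; ring

lemma det2_sub_smul (v r w : ℝ × ℝ) (s : ℝ) :
    det2 v (r - s • w) = det2 v r - s * det2 v w := by
  simp [det2, Prod.fst_sub, Prod.snd_sub, Prod.smul_fst, Prod.smul_snd, smul_eq_mul]; ring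

lemma det2_negsub_smul (v r w : ℝ × ℝ) (s : ℝ) :
    det2 v (-r - s • w) = -det2 v r - s * det2 v w := by
  simp [det2, Prod.fst_sub, Prod.snd_sub, Prod.fst_neg, Prod.snd_neg,
    Prod.smul_fst, Prod.smul_snd, smul_eq_mul]; ring

lemma sq_pos_of_ne_zero {v : ℝ × ℝ} (hv : v ≠ 0) : 0 < v.1^2 + v.2^2 := by
  have h1 : v.1 ≠ 0 ∨ v.2 ≠ 0 := by
    by_contra hc; push_neg at hc; exact hv (Prod.ext hc.1 hc.2)
  rcases h1 with h | h <;> positivity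

/-- quadrant classifier -/
def q4 (v : ℝ × ℝ) : Fin 4 :=
  if 0 < v.1 ∧ 0 ≤ v.2 then 0 else if v.1 ≤ 0 ∧ 0 < v.2 then 1
  else if v.1 < 0 ∧ v.2 ≤ 0 then 2 else 3

lemma q4_spec {v : ℝ × ℝ} (hv : v ≠ 0) :
    (q4 v = 0 → 0 < v.1 ∧ 0 ≤ v.2) ∧ (q4 v = 1 → v.1 ≤ 0 ∧ 0 < v.2) ∧
    (q4 v = 2 → v.1 < 0 ∧ v.2 ≤ 0) ∧ (q4 v = 3 → 0 ≤ v.1 ∧ v.2 < 0) := by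
  have hvne : v.1 ≠ 0 ∨ v.2 ≠ 0 := by
    by_contra hc; push_neg at hc; exact hv (Prod.ext hc.1 hc.2)
  unfold q4
  split_ifs with h1 h2 h3
  · exact ⟨fun _ => h1, fun h => absurd h (by decide), fun h => absurd h (by decide),
      fun h => absurd h (by decide)⟩
  · exact ⟨fun h => absurd h (by decide), fun _ => h2, fun h => absurd h (by decide),
      fun h => absurd h (by decide)⟩
  · exact ⟨fun h => absurd h (by decide), fun h => absurd h (by decide), fun _ => h3,
      fun h => absurd h (by decide)⟩
  · push_neg at h1 h2 h3
    refine ⟨fun h => absurd h (by decide), fun h => absurd h (by decide),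
      fun h => absurd h (by decide), fun _ => ?_⟩
    rcases lt_trichotomy v.1 0 with hx | hx | hx
    · exact absurd (h3 hx) (not_lt.mpr (h2 hx.le))
    · have h2' := h2 (le_of_eq hx)
      have hv2 : v.2 ≠ 0 := by
        rcases hvne with h | h
        · exact absurd hx h
        · exact h
      exact ⟨le_of_eq hx.symm, lt_of_le_of_ne h2' hv2⟩
    · exact ⟨hx.le, h1 hx⟩

lemma fin4_cases (c : Fin 4) : c = 0 ∨ c = 1 ∨ c = 2 ∨ c = 3 := by revert c; decide

lemma same_q4_bounds {v w : ℝ × ℝ} (hv : v ≠ 0) (hw : w ≠ 0) (h : q4 v = q4 w)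
    {M N : ℝ} (hv1 : |v.1| ≤ M) (hw1 : |w.1| ≤ M) (hv2 : |v.2| ≤ N) (hw2 : |w.2| ≤ N) :
    |v.1 - w.1| ≤ M ∧ |v.2 - w.2| ≤ N := by
  obtain ⟨s0v, s1v, s2v, s3v⟩ := q4_spec hv
  obtain ⟨s0w, s1w, s2w, s3w⟩ := q4_spec hw
  rw [abs_le] at hv1 hw1 hv2 hw2
  rcases fin4_cases (q4 v) with hc | hc | hc | hc
  · obtain ⟨a1, a2⟩ := s0v hc
    obtain ⟨b1, b2⟩ := s0w (h ▸ hc)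
    exact ⟨abs_le.mpr ⟨by linarith, by linarith⟩, abs_le.mpr ⟨by linarith, by linarith⟩⟩
  · obtain ⟨a1, a2⟩ := s1v hc
    obtain ⟨b1, b2⟩ := s1w (h ▸ hc)
    exact ⟨abs_le.mpr ⟨by linarith, by linarith⟩, abs_le.mpr ⟨by linarith, by linarith⟩⟩
  · obtain ⟨a1, a2⟩ := s2v hc
    obtain ⟨b1, b2⟩ := s2w (h ▸ hc)
    exact ⟨abs_le.mpr ⟨by linarith, by linarith⟩, abs_le.mpr ⟨by linarith, by linarith⟩⟩
  · obtain ⟨a1, a2⟩ := s3v hc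
    obtain ⟨b1, b2⟩ := s3w (h ▸ hc)
    exact ⟨abs_le.mpr ⟨by linarith, by linarith⟩, abs_le.mpr ⟨by linarith, by linarith⟩⟩

/-- positivity of the dependence coefficient for same-quadrant vectors -/
lemma smul_same_q4_pos {v w : ℝ × ℝ} (hv : v ≠ 0) (hw : w ≠ 0) (h : q4 v = q4 w)
    {μ : ℝ} (hμ : w = μ • v) : 0 < μ := by
  obtain ⟨s0v, s1v, s2v, s3v⟩ := q4_spec hv
  obtain ⟨s0w, s1w, s2w, s3w⟩ := q4_spec hw
  have e1 : w.1 = μ * v.1 := by rw [hμ]; simp [Prod.smul_fst, smul_eq_mul]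
  have e2 : w.2 = μ * v.2 := by rw [hμ]; simp [Prod.smul_snd, smul_eq_mul]
  rcases fin4_cases (q4 v) with hc | hc | hc | hc
  · obtain ⟨a1, a2⟩ := s0v hc
    obtain ⟨b1, b2⟩ := s0w (h ▸ hc)
    nlinarith
  · obtain ⟨a1, a2⟩ := s1v hc
    obtain ⟨b1, b2⟩ := s1w (h ▸ hc)
    nlinarith
  · obtain ⟨a1, a2⟩ := s2v hc
    obtain ⟨b1, b2⟩ := s2w (h ▸ hc)
    nlinarith
  · obtain ⟨a1, a2⟩ := s3v hc
    obtain ⟨b1, b2⟩ := s3w (h ▸ hc)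
    nlinarith

lemma det2_self (v : ℝ × ℝ) : det2 v v = 0 := by simp [det2]; ring

lemma det2_rot_self (v : ℝ × ℝ) : det2 v (rot v) = v.1^2 + v.2^2 := by simp [det2, rot]; ring

lemma rot_ne_zero {v : ℝ × ℝ} (hv : v ≠ 0) : rot v ≠ 0 := by
  simp only [rot, Prod.ext_iff, Prod.mk.injEq, ne_eq]
  intro h
  exact hv (by ext <;> simp [h.2, ← neg_eq_zero, h.1] <;> simp_all)

/-- if u ≠ 0 and both v, w are orthogonal to u then det2 v w = 0 -/
lemma det2_eq_zero_of_perp {u v w : ℝ × ℝ} (hu : u ≠ 0) (hv : dot u v = 0) (hw : dot u w = 0) :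
    det2 v w = 0 := by
  have h1 : u.1 ≠ 0 ∨ u.2 ≠ 0 := by
    by_contra h; push_neg at h; exact hu (Prod.ext h.1 h.2)
  simp only [dot] at hv hw
  rcases h1 with h | h
  · have : det2 v w * u.1 = 0 := by
      simp only [det2]; linear_combination w.2 * hv - v.2 * hw
    exact (mul_eq_zero.mp this).resolve_right h
  · have : det2 v w * u.2 = 0 := by
      simp only [det2]; linear_combination v.1 * hw - w.1 * hv
    exact (mul_eq_zero.mp this).resolve_right h

lemma eq_zero_of_perp_two {v w d : ℝ × ℝ} (hvw : det2 v w ≠ 0)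
    (hv : dot v d = 0) (hw : dot w d = 0) : d = 0 := by
  by_contra hd
  exact hvw (det2_eq_zero_of_perp hd (by rwa [dot_comm]) (by rwa [dot_comm]))

/-- dependence from vanishing determinant -/
lemma exists_smul_of_det2_eq_zero {v w : ℝ × ℝ} (h : det2 v w = 0) (hv : v ≠ 0) :
    ∃ μ : ℝ, w = μ • v := by
  have hN : v.1^2 + v.2^2 ≠ 0 := by
    have h1 : v.1 ≠ 0 ∨ v.2 ≠ 0 := by
      by_contra hc; push_neg at hc; exact hv (Prod.ext hc.1 hc.2)
    rcases h1 with h1 | h1 <;> positivity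
  refine ⟨dot w v / (v.1^2 + v.2^2), ?_⟩
  simp only [det2] at h
  ext
  · show w.1 = _ * v.1
    rw [div_mul_eq_mul_div, eq_div_iff hN]; simp only [dot]; linear_combination (-v.2) * h
  · show w.2 = _ * v.2
    rw [div_mul_eq_mul_div, eq_div_iff hN]; simp only [dot]; linear_combination v.1 * h

/-- decomposition of a vector orthogonal to a ≠ 0 along rot a -/
lemma perp_decomp {a v : ℝ × ℝ} (ha : a ≠ 0) (hv : dot a v = 0) :
    ∃ s : ℝ, v = s • rot a := by
  refine exists_smul_of_det2_eq_zero ?_ (rot_ne_zero ha)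
  simp only [det2, rot, dot] at hv ⊢
  linear_combination -hv



lemma mem_openSegment_middle {x d : ℝ × ℝ} {σ τ : ℝ} (hσ : σ < 0) (hτ : 0 < τ) :
    x ∈ openSegment ℝ (x + σ • d) (x + τ • d) := by
  have h0 : (0:ℝ) < τ - σ := by linarith
  refine ⟨τ / (τ - σ), -σ / (τ - σ), div_pos hτ h0, div_pos (by linarith) h0, ?_, ?_⟩
  · field_simp; ring
  · ext
    · show τ / (τ - σ) * (x.1 + σ * d.1) + -σ / (τ - σ) * (x.1 + τ * d.1) = x.1
      field_simp; ring
    · show τ / (τ - σ) * (x.2 + σ * d.2) + -σ / (τ - σ) * (x.2 + τ * d.2) = x.2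
      field_simp; ring

/-- among three distinct points on a common affine line, one is in the open
segment of the other two. -/
lemma three_collinear {x y z d : ℝ × ℝ} {s t : ℝ}
    (hy : y = x + s • d) (hz : z = x + t • d)
    (hxy : x ≠ y) (hxz : x ≠ z) (hyz : y ≠ z) :
    x ∈ openSegment ℝ y z ∨ y ∈ openSegment ℝ x z ∨ z ∈ openSegment ℝ x y := by
  have hs : s ≠ 0 := by rintro rfl; simp at hy; exact hxy hy.symm
  have ht : t ≠ 0 := by rintro rfl; simp at hz; exact hxz hz.symm
  have hst : s ≠ t := by rintro rfl; rw [hy] at hyz; rw [hz] at hyz; exact hyz rfl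
  have hx0 : x = y + (-s) • d := by rw [hy]; module
  have hzy : z = y + (t - s) • d := by rw [hy, hz]; module
  have hxz'' : x = z + (-t) • d := by rw [hz]; module
  have hyz'' : y = z + (s - t) • d := by rw [hz, hy]; module
  rcases lt_trichotomy s 0 with h1 | h1 | h1
  · rcases lt_trichotomy t 0 with h2 | h2 | h2
    · rcases lt_or_gt_of_ne hst with h3 | h3
      · right; right
        rw [hxz'', hyz'', openSegment_symm]
        exact mem_openSegment_middle (by linarith) (by linarith)
      · right; left
        rw [hx0, hzy, openSegment_symm]
        exact mem_openSegment_middle (by linarith) (by linarith)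
    · exact absurd h2 ht
    · left
      rw [hy, hz]
      exact mem_openSegment_middle h1 h2
  · exact absurd h1 hs
  · rcases lt_trichotomy t 0 with h2 | h2 | h2
    · left
      rw [hy, hz, openSegment_symm]
      exact mem_openSegment_middle h2 h1
    · exact absurd h2 ht
    · rcases lt_or_gt_of_ne hst with h3 | h3
      · right; left
        rw [hx0, hzy]
        exact mem_openSegment_middle (by linarith) (by linarith)
      · right; right
        rw [hxz'', hyz'']
        exact mem_openSegment_middle (by linarith) (by linarith)



/-- linear form of an integer triple -/
def lf (t : ℤ × ℤ × ℤ) (p : ℝ × ℝ) : ℝ :=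
  (t.1 : ℝ) * p.1 + (t.2.1 : ℝ) * p.2 - (t.2.2 : ℝ)

/-- integer normal vector, as a real vector -/
def nr (t : ℤ × ℤ × ℤ) : ℝ × ℝ := ((t.1 : ℝ), (t.2.1 : ℝ))

def lineOf (t : ℤ × ℤ × ℤ) : Set (ℝ × ℝ) := {p | lf t p = 0}

/-- the finite set of integer triples indexing all Farey lines -/
def TT (m n : ℕ) : Finset (ℤ × ℤ × ℤ) :=
  ((Finset.Icc (-(m:ℤ)) m) ×ˢ (Finset.Icc (-(n:ℤ)) n) ×ˢ
      (Finset.Icc (-((m:ℤ)+n)) ((m:ℤ)+n))).filter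
    (fun t => ¬(t.1 = 0 ∧ t.2.1 = 0))

lemma mem_TT {m n : ℕ} {t : ℤ × ℤ × ℤ} :
    t ∈ TT m n ↔ |t.1| ≤ (m:ℤ) ∧ |t.2.1| ≤ (n:ℤ) ∧ |t.2.2| ≤ (m:ℤ)+n ∧
      ¬(t.1 = 0 ∧ t.2.1 = 0) := by
  simp [TT, Finset.mem_filter, Finset.mem_product, Finset.mem_Icc, abs_le, and_assoc]

lemma lf_add (t : ℤ × ℤ × ℤ) (x d : ℝ × ℝ) : lf t (x + d) = lf t x + dot (nr t) d := by
  simp [lf, dot, nr, Prod.fst_add, Prod.snd_add]; ring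

lemma lf_combo (t : ℤ × ℤ × ℤ) (p q : ℝ × ℝ) {a b : ℝ} (hab : a + b = 1) :
    lf t (a • p + b • q) = a * lf t p + b * lf t q := by
  have hb : b = 1 - a := by linarith
  subst hb
  simp [lf, Prod.smul_fst, Prod.smul_snd, Prod.fst_add, Prod.snd_add, smul_eq_mul]
  ring

lemma nr_ne_zero {m n : ℕ} {t : ℤ × ℤ × ℤ} (ht : t ∈ TT m n) : nr t ≠ 0 := by
  rw [mem_TT] at ht
  intro h
  have h1 : (t.1 : ℝ) = 0 := by simpa [nr] using congrArg Prod.fst h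
  have h2 : (t.2.1 : ℝ) = 0 := by simpa [nr] using congrArg Prod.snd h
  exact ht.2.2.2 ⟨by exact_mod_cast h1, by exact_mod_cast h2⟩

lemma isFareyLine_of_mem {m n : ℕ} {t : ℤ × ℤ × ℤ} (ht : t ∈ TT m n)
    (hmeet : (lineOf t ∩ unitSquare).Nonempty) : IsFareyLine m n (lineOf t) := by
  rw [mem_TT] at ht
  refine ⟨hmeet, t.1, t.2.1, t.2.2, ht.1, ht.2.1, ?_, ?_⟩
  · intro h; rw [Prod.ext_iff] at h; exact ht.2.2.2 ⟨h.1, h.2⟩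
  · ext p; simp only [lineOf, lf, Set.mem_setOf_eq, sub_eq_zero]

lemma exists_mem_of_farey {m n : ℕ} {L : Set (ℝ × ℝ)} (hL : IsFareyLine m n L) :
    ∃ t ∈ TT m n, L = lineOf t := by
  obtain ⟨⟨q, hqL, hqS⟩, u, v, w, hu, hv, huv, rfl⟩ := hL
  refine ⟨(u, v, w), ?_, ?_⟩
  · rw [mem_TT]
    refine ⟨hu, hv, ?_, fun h => huv (by simp only [Prod.mk.injEq]; exact ⟨h.1, h.2⟩)⟩
    have hq1 : (0:ℝ) ≤ q.1 ∧ q.1 ≤ 1 := ⟨hqS.1.1, hqS.2.1⟩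
    have hq2 : (0:ℝ) ≤ q.2 ∧ q.2 ≤ 1 := ⟨hqS.1.2, hqS.2.2⟩
    have hw : |(w:ℝ)| ≤ (m:ℝ) + n := by
      have : (w:ℝ) = (u:ℝ) * q.1 + (v:ℝ) * q.2 := hqL.symm
      rw [this]
      have h1 : |(u:ℝ)| ≤ (m:ℝ) := by exact_mod_cast (by exact_mod_cast hu : |(u:ℝ)| ≤ ((m:ℤ):ℝ))
      have h2 : |(v:ℝ)| ≤ (n:ℝ) := by exact_mod_cast (by exact_mod_cast hv : |(v:ℝ)| ≤ ((n:ℤ):ℝ))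
      calc |(u:ℝ) * q.1 + (v:ℝ) * q.2| ≤ |(u:ℝ) * q.1| + |(v:ℝ) * q.2| := abs_add_le _ _
        _ = |(u:ℝ)| * |q.1| + |(v:ℝ)| * |q.2| := by rw [abs_mul, abs_mul]
        _ ≤ |(u:ℝ)| * 1 + |(v:ℝ)| * 1 := by
            gcongr
            · rw [abs_of_nonneg hq1.1]; exact hq1.2
            · rw [abs_of_nonneg hq2.1]; exact hq2.2
        _ ≤ (m:ℝ) + n := by rw [mul_one, mul_one]; exact add_le_add h1 h2
    exact_mod_cast (by push_cast; exact hw : |(w:ℝ)| ≤ (((m:ℤ)+n : ℤ) : ℝ))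
  · ext p; simp only [lineOf, lf, Set.mem_setOf_eq, sub_eq_zero]

section Main

variable (m n : ℕ) (p₀ : ℝ × ℝ)

/-- sign of the form at the base point -/
def eps (t : ℤ × ℤ × ℤ) : ℝ := if 0 < lf t p₀ then 1 else -1

lemma eps_ne_zero (t : ℤ × ℤ × ℤ) : eps p₀ t ≠ 0 := by
  unfold eps; split <;> norm_num

lemma abs_eps (t : ℤ × ℤ × ℤ) : |eps p₀ t| = 1 := by
  unfold eps; split <;> norm_num

lemma lf_p₀_ne (hp₀ : p₀ ∈ FareyComplex m n) {t : ℤ × ℤ × ℤ} (ht : t ∈ TT m n) : lf t p₀ ≠ 0 := by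
  intro h
  have hmeet : (lineOf t ∩ unitSquare).Nonempty := ⟨p₀, h, hp₀.1⟩
  exact hp₀.2 (lineOf t) (isFareyLine_of_mem ht hmeet) h

lemma eps_lf_p₀_pos (hp₀ : p₀ ∈ FareyComplex m n) {t : ℤ × ℤ × ℤ} (ht : t ∈ TT m n) : 0 < eps p₀ t * lf t p₀ := by
  have := lf_p₀_ne m n p₀ hp₀ ht
  unfold eps; split
  · simpa
  · rename_i hlt
    have : lf t p₀ < 0 := lt_of_le_of_ne (not_lt.mp hlt) this
    nlinarith

/-- the open cell -/
def CC : Set (ℝ × ℝ) := {p | ∀ t ∈ TT m n, 0 < eps p₀ t * lf t p}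

/-- the closed cell -/
def PP : Set (ℝ × ℝ) := {p | ∀ t ∈ TT m n, 0 ≤ eps p₀ t * lf t p}

lemma p₀_mem_CC (hp₀ : p₀ ∈ FareyComplex m n) : p₀ ∈ CC m n p₀ := fun t ht => eps_lf_p₀_pos m n p₀ hp₀ ht

lemma CC_subset_PP : CC m n p₀ ⊆ PP m n p₀ := fun p hp t ht => (hp t ht).le

lemma convex_PP : Convex ℝ (PP m n p₀) := by
  intro p hp q hq a b ha hb hab
  intro t ht
  have := lf_combo t p q hab
  have h1 := hp t ht
  have h2 := hq t ht
  rw [this, mul_add]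
  have : 0 ≤ a * (eps p₀ t * lf t p) := mul_nonneg ha h1
  have : 0 ≤ b * (eps p₀ t * lf t q) := mul_nonneg hb h2
  nlinarith

lemma convex_CC : Convex ℝ (CC m n p₀) := by
  intro p hp q hq a b ha hb hab
  intro t ht
  have hc := lf_combo t p q hab
  have h1 := hp t ht
  have h2 := hq t ht
  rw [hc, mul_add]
  rcases ha.lt_or_eq with ha' | ha'
  · have : 0 < a * (eps p₀ t * lf t p) := mul_pos ha' h1
    have : 0 ≤ b * (eps p₀ t * lf t q) := mul_nonneg hb h2.le
    nlinarith
  · have hb' : b = 1 := by linarith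
    rw [← ha', hb']; simpa using h2

lemma continuous_lf (t : ℤ × ℤ × ℤ) : Continuous (fun p : ℝ × ℝ => lf t p) := by
  unfold lf; fun_prop

lemma isOpen_CC : IsOpen (CC m n p₀) := by
  have : CC m n p₀ = ⋂ t ∈ (TT m n : Set (ℤ × ℤ × ℤ)), {p | 0 < eps p₀ t * lf t p} := by
    ext p; simp [CC]
  rw [this]
  exact (TT m n).finite_toSet.isOpen_biInter fun t _ =>
    isOpen_lt continuous_const (continuous_const.mul (continuous_lf t))

lemma isClosed_PP : IsClosed (PP m n p₀) := by
  have : PP m n p₀ = ⋂ t ∈ (TT m n : Set (ℤ × ℤ × ℤ)), {p | 0 ≤ eps p₀ t * lf t p} := by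
    ext p; simp [PP]
  rw [this]
  exact isClosed_biInter fun t _ =>
    isClosed_le continuous_const (continuous_const.mul (continuous_lf t))


/-- the four boundary triples -/
lemma coordinate_triples_mem (hm : 0 < m) (hn : 0 < n) :
    ((1:ℤ),(0:ℤ),(0:ℤ)) ∈ TT m n ∧ ((1:ℤ),(0:ℤ),(1:ℤ)) ∈ TT m n ∧
    ((0:ℤ),(1:ℤ),(0:ℤ)) ∈ TT m n ∧ ((0:ℤ),(1:ℤ),(1:ℤ)) ∈ TT m n := by
  refine ⟨?_, ?_, ?_, ?_⟩ <;> rw [mem_TT] <;> simp <;> omega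

lemma farey_boundary (hm : 0 < m) (hn : 0 < n) (hp₀ : p₀ ∈ FareyComplex m n) :
    0 < p₀.1 ∧ p₀.1 < 1 ∧ 0 < p₀.2 ∧ p₀.2 < 1 := by
  obtain ⟨h1, h2, h3, h4⟩ := coordinate_triples_mem m n hm hn
  have e1 := lf_p₀_ne m n p₀ hp₀ h1
  have e2 := lf_p₀_ne m n p₀ hp₀ h2
  have e3 := lf_p₀_ne m n p₀ hp₀ h3
  have e4 := lf_p₀_ne m n p₀ hp₀ h4
  simp only [lf] at e1 e2 e3 e4
  push_cast at e1 e2 e3 e4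
  have hs := hp₀.1
  obtain ⟨⟨a1, a2⟩, ⟨b1, b2⟩⟩ := hs
  refine ⟨?_, ?_, ?_, ?_⟩
  · rcases a1.lt_or_eq with h | h; exact h; exfalso; apply e1; rw [← h]; ring
  · rcases b1.lt_or_eq with h | h; exact h; exfalso; apply e2; rw [h]; ring
  · rcases a2.lt_or_eq with h | h; exact h; exfalso; apply e3; rw [← h]; ring
  · rcases b2.lt_or_eq with h | h; exact h; exfalso; apply e4; rw [h]; ring

lemma eps_coordinate (hm : 0 < m) (hn : 0 < n) (hp₀ : p₀ ∈ FareyComplex m n) :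
    eps p₀ ((1:ℤ),(0:ℤ),(0:ℤ)) = 1 ∧ eps p₀ ((1:ℤ),(0:ℤ),(1:ℤ)) = -1 ∧
    eps p₀ ((0:ℤ),(1:ℤ),(0:ℤ)) = 1 ∧ eps p₀ ((0:ℤ),(1:ℤ),(1:ℤ)) = -1 := by
  obtain ⟨c1, c2, c3, c4⟩ := farey_boundary m n p₀ hm hn hp₀
  refine ⟨?_, ?_, ?_, ?_⟩
  · have h : 0 < lf ((1:ℤ),(0:ℤ),(0:ℤ)) p₀ := by simp only [lf]; push_cast; linarith
    unfold eps; rw [if_pos h]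
  · have h : ¬ (0 < lf ((1:ℤ),(0:ℤ),(1:ℤ)) p₀) := by simp only [lf]; push_cast; intro h; linarith
    unfold eps; rw [if_neg h]
  · have h : 0 < lf ((0:ℤ),(1:ℤ),(0:ℤ)) p₀ := by simp only [lf]; push_cast; linarith
    unfold eps; rw [if_pos h]
  · have h : ¬ (0 < lf ((0:ℤ),(1:ℤ),(1:ℤ)) p₀) := by simp only [lf]; push_cast; intro h; linarith
    unfold eps; rw [if_neg h]

lemma PP_subset_square (hm : 0 < m) (hn : 0 < n) (hp₀ : p₀ ∈ FareyComplex m n) :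
    PP m n p₀ ⊆ unitSquare := by
  intro p hp
  obtain ⟨h1, h2, h3, h4⟩ := coordinate_triples_mem m n hm hn
  obtain ⟨e1, e2, e3, e4⟩ := eps_coordinate m n p₀ hm hn hp₀
  have k1 := hp _ h1; have k2 := hp _ h2; have k3 := hp _ h3; have k4 := hp _ h4
  rw [e1] at k1; rw [e2] at k2; rw [e3] at k3; rw [e4] at k4
  simp only [lf] at k1 k2 k3 k4
  push_cast at k1 k2 k3 k4
  simp only [unitSquare, Set.mem_Icc, Prod.le_def]
  norm_num
  exact ⟨⟨by linarith, by linarith⟩, by linarith, by linarith⟩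

lemma CC_subset_farey (hm : 0 < m) (hn : 0 < n) (hp₀ : p₀ ∈ FareyComplex m n) :
    CC m n p₀ ⊆ FareyComplex m n := by
  intro p hp
  refine ⟨PP_subset_square m n p₀ hm hn hp₀ (CC_subset_PP m n p₀ hp), ?_⟩
  intro L hL hpL
  obtain ⟨t, ht, rfl⟩ := exists_mem_of_farey hL
  have := hp t ht
  rw [hpL] at this
  simp at this

lemma K_eq_CC (hm : 0 < m) (hn : 0 < n) (hp₀ : p₀ ∈ FareyComplex m n) :
    connectedComponentIn (FareyComplex m n) p₀ = CC m n p₀ := by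
  apply Set.Subset.antisymm
  · intro p hp t ht
    set Kc := connectedComponentIn (FareyComplex m n) p₀ with hKc
    have hKF : Kc ⊆ FareyComplex m n := connectedComponentIn_subset _ _
    have hKs : Kc ⊆ {q | lf t q < 0} ∪ {q | 0 < lf t q} := by
      intro q hq
      have hqF := hKF hq
      have : lf t q ≠ 0 := by
        intro h0
        exact hqF.2 (lineOf t) (isFareyLine_of_mem ht ⟨q, h0, hqF.1⟩) h0
      rcases this.lt_or_gt with h | h
      · exact Or.inl h
      · exact Or.inr h
    have hdisj : Disjoint {q : ℝ × ℝ | lf t q < 0} {q | 0 < lf t q} := by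
      rw [Set.disjoint_left]; intro q hq1 hq2; simp at hq1 hq2; linarith
    have hprec : IsPreconnected Kc := isPreconnected_connectedComponentIn
    have hp₀K : p₀ ∈ Kc := mem_connectedComponentIn hp₀
    rcases hprec.subset_or_subset (isOpen_lt (continuous_lf t) continuous_const)
        (isOpen_lt continuous_const (continuous_lf t)) hdisj hKs with hs | hs
    · have hn0 : lf t p₀ < 0 := hs hp₀K
      have : eps p₀ t = -1 := by unfold eps; rw [if_neg]; linarith
      rw [this]
      have := hs hp
      simp only [Set.mem_setOf_eq] at this
      nlinarith
    · have hn0 : 0 < lf t p₀ := hs hp₀K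
      have : eps p₀ t = 1 := by unfold eps; rw [if_pos hn0]
      rw [this]
      have := hs hp
      simp only [Set.mem_setOf_eq] at this
      nlinarith
  · exact (convex_CC m n p₀).isPreconnected.subset_connectedComponentIn
      (p₀_mem_CC m n p₀ hp₀) (CC_subset_farey m n p₀ hm hn hp₀)

/-- pulled towards p₀, points of PP enter CC -/
lemma pull_mem_CC (hp₀ : p₀ ∈ FareyComplex m n) {p : ℝ × ℝ} (hp : p ∈ PP m n p₀)
    {θ : ℝ} (h0 : 0 < θ) (h1 : θ ≤ 1) : (1 - θ) • p + θ • p₀ ∈ CC m n p₀ := by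
  intro t ht
  rw [lf_combo t p p₀ (by ring : (1-θ) + θ = 1), mul_add]
  have k1 := hp t ht
  have k2 := eps_lf_p₀_pos m n p₀ hp₀ ht
  have e1 : 0 ≤ (1-θ) * (eps p₀ t * lf t p) := mul_nonneg (by linarith) k1
  have e2 : 0 < θ * (eps p₀ t * lf t p₀) := mul_pos h0 k2
  nlinarith

lemma closure_CC (hm : 0 < m) (hn : 0 < n) (hp₀ : p₀ ∈ FareyComplex m n) :
    closure (CC m n p₀) = PP m n p₀ := by
  apply Set.Subset.antisymm
  · exact closure_minimal (CC_subset_PP m n p₀) (isClosed_PP m n p₀)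
  · intro p hp
    have htt : Filter.Tendsto (fun k : ℕ => (1 - (1:ℝ)/(k+1)) • p + ((1:ℝ)/(k+1)) • p₀)
        Filter.atTop (nhds p) := by
      have h0 : Filter.Tendsto (fun k : ℕ => (1:ℝ)/(k+1)) Filter.atTop (nhds 0) :=
        tendsto_one_div_add_atTop_nhds_zero_nat
      have h1 : Filter.Tendsto (fun k : ℕ => ((1:ℝ) - 1/(k+1))) Filter.atTop (nhds (1 - 0)) :=
        (tendsto_const_nhds (x := (1:ℝ))).sub h0
      have := (h1.smul_const p).add (h0.smul_const p₀)
      simpa using this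
    refine mem_closure_of_tendsto htt (Filter.Eventually.of_forall fun k => ?_)
    exact pull_mem_CC m n p₀ hp₀ hp (by positivity) (by
      rw [div_le_one (by positivity)]; linarith [Nat.cast_nonneg (α := ℝ) k])


/-- Key avoidance lemma: no constraint form changes strict sign on `PP`. -/
lemma no_sign_change (hp₀ : p₀ ∈ FareyComplex m n) {t : ℤ × ℤ × ℤ} (ht : t ∈ TT m n)
    {p q : ℝ × ℝ} (hp : p ∈ PP m n p₀) (hq : q ∈ PP m n p₀)
    (hneg : lf t p < 0) (hpos : 0 < lf t q) : False := by
  -- pull p and q slightly towards p₀ keeping strict signs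
  obtain ⟨p', hp'C, hp'neg⟩ : ∃ p', p' ∈ CC m n p₀ ∧ lf t p' < 0 := by
    set B := |lf t p₀ - lf t p| + 1 with hB
    have hBpos : 0 < B := by positivity
    set θ := min (1/2) ((-lf t p) / (2 * B)) with hθ
    have hθpos : 0 < θ := lt_min (by norm_num) (div_pos (by linarith) (by linarith))
    have hθle : θ ≤ 1 := le_trans (min_le_left _ _) (by norm_num)
    have hθB : θ * B ≤ (-lf t p) / 2 := by
      have h3 : θ * B ≤ (-lf t p) / (2 * B) * B :=
        mul_le_mul_of_nonneg_right (min_le_right _ _) hBpos.le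
      have h4 : (-lf t p) / (2 * B) * B = (-lf t p) / 2 := by field_simp
      linarith
    clear_value θ
    clear_value B
    refine ⟨(1 - θ) • p + θ • p₀, pull_mem_CC m n p₀ hp₀ hp hθpos hθle, ?_⟩
    rw [lf_combo t p p₀ (by ring : (1-θ) + θ = 1)]
    have h1 : (1 - θ) * lf t p + θ * lf t p₀ = lf t p + θ * (lf t p₀ - lf t p) := by ring
    rw [h1]
    have h2 : θ * (lf t p₀ - lf t p) ≤ θ * B := by
      apply mul_le_mul_of_nonneg_left _ hθpos.le
      rw [hB]
      calc lf t p₀ - lf t p ≤ |lf t p₀ - lf t p| := le_abs_self _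
        _ ≤ _ := by linarith
    linarith
  obtain ⟨q', hq'C, hq'pos⟩ : ∃ q', q' ∈ CC m n p₀ ∧ 0 < lf t q' := by
    set B := |lf t p₀ - lf t q| + 1 with hB
    have hBpos : 0 < B := by positivity
    set θ := min (1/2) ((lf t q) / (2 * B)) with hθ
    have hθpos : 0 < θ := lt_min (by norm_num) (div_pos (by linarith) (by linarith))
    have hθle : θ ≤ 1 := le_trans (min_le_left _ _) (by norm_num)
    have hθB : θ * B ≤ (lf t q) / 2 := by
      have h3 : θ * B ≤ (lf t q) / (2 * B) * B :=
        mul_le_mul_of_nonneg_right (min_le_right _ _) hBpos.le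
      have h4 : (lf t q) / (2 * B) * B = (lf t q) / 2 := by field_simp
      linarith
    clear_value θ
    clear_value B
    refine ⟨(1 - θ) • q + θ • p₀, pull_mem_CC m n p₀ hp₀ hq hθpos hθle, ?_⟩
    rw [lf_combo t q p₀ (by ring : (1-θ) + θ = 1)]
    have h1 : (1 - θ) * lf t q + θ * lf t p₀ = lf t q + θ * (lf t p₀ - lf t q) := by ring
    rw [h1]
    have h2 : -(θ * (lf t p₀ - lf t q)) ≤ θ * B := by
      rw [← mul_neg]
      apply mul_le_mul_of_nonneg_left _ hθpos.le
      rw [hB]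
      calc -(lf t p₀ - lf t q) ≤ |lf t p₀ - lf t q| := neg_le_abs _
        _ ≤ _ := by linarith
    linarith
  -- now find a zero of lf t on the segment [p', q'] inside CC
  set s := lf t p' / (lf t p' - lf t q') with hs
  have hden : lf t p' - lf t q' < 0 := by linarith
  have hs0 : 0 < s := div_pos_of_neg_of_neg hp'neg hden
  have hs1 : s < 1 := by
    rw [hs, div_lt_one_of_neg hden]
    linarith
  have hz : (1 - s) • p' + s • q' ∈ CC m n p₀ :=
    convex_CC m n p₀ hp'C hq'C (by linarith) hs0.le (by ring)
  have hzero : lf t ((1 - s) • p' + s • q') = 0 := by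
    rw [lf_combo t p' q' (by ring : (1-s) + s = 1)]
    have hmc : s * (lf t p' - lf t q') = lf t p' := div_mul_cancel₀ _ hden.ne
    linear_combination -hmc
  have := hz t ht
  rw [hzero, mul_zero] at this
  exact lt_irrefl 0 this


/-- integer sign of the form at the base point -/
def epsZ (t : ℤ × ℤ × ℤ) : ℤ := if 0 < lf t p₀ then 1 else -1

lemma epsZ_cast (t : ℤ × ℤ × ℤ) : ((epsZ p₀ t : ℤ) : ℝ) = eps p₀ t := by
  unfold epsZ eps; split <;> norm_num

/-- signed normal vector -/
def sg (t : ℤ × ℤ × ℤ) : ℝ × ℝ := eps p₀ t • nr t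

/-- signed right-hand side -/
def sc (t : ℤ × ℤ × ℤ) : ℝ := eps p₀ t * (t.2.2 : ℝ)

lemma eps_lf_eq (t : ℤ × ℤ × ℤ) (p : ℝ × ℝ) :
    eps p₀ t * lf t p = dot (sg p₀ t) p - sc p₀ t := by
  simp [lf, dot, sg, sc, nr, Prod.smul_fst, Prod.smul_snd, smul_eq_mul]; ring

lemma sg_ne_zero {t : ℤ × ℤ × ℤ} (ht : t ∈ TT m n) : sg p₀ t ≠ 0 :=
  smul_ne_zero (eps_ne_zero p₀ t) (nr_ne_zero ht)

lemma sg_fst (t : ℤ × ℤ × ℤ) : (sg p₀ t).1 = eps p₀ t * (t.1 : ℝ) := by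
  simp [sg, nr, Prod.smul_fst, smul_eq_mul]

lemma sg_snd (t : ℤ × ℤ × ℤ) : (sg p₀ t).2 = eps p₀ t * (t.2.1 : ℝ) := by
  simp [sg, nr, Prod.smul_snd, smul_eq_mul]

lemma abs_sg_fst {t : ℤ × ℤ × ℤ} (ht : t ∈ TT m n) : |(sg p₀ t).1| ≤ (m : ℝ) := by
  rw [sg_fst, abs_mul, abs_eps, one_mul]
  have := (mem_TT.mp ht).1
  calc |(t.1 : ℝ)| = ((|t.1| : ℤ) : ℝ) := by push_cast; rfl
    _ ≤ ((m : ℤ) : ℝ) := by exact_mod_cast this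
    _ = (m : ℝ) := by push_cast; rfl

lemma abs_sg_snd {t : ℤ × ℤ × ℤ} (ht : t ∈ TT m n) : |(sg p₀ t).2| ≤ (n : ℝ) := by
  rw [sg_snd, abs_mul, abs_eps, one_mul]
  have := (mem_TT.mp ht).2.1
  calc |(t.2.1 : ℝ)| = ((|t.2.1| : ℤ) : ℝ) := by push_cast; rfl
    _ ≤ ((n : ℤ) : ℝ) := by exact_mod_cast this
    _ = (n : ℝ) := by push_cast; rfl

lemma lf_zero_iff_dot {t : ℤ × ℤ × ℤ} (p : ℝ × ℝ) :
    lf t p = 0 ↔ dot (sg p₀ t) p = sc p₀ t := by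
  constructor
  · intro h
    have := eps_lf_eq p₀ t p
    rw [h, mul_zero] at this
    linarith [this]
  · intro h
    have h2 := eps_lf_eq p₀ t p
    rw [h] at h2
    have h3 : eps p₀ t * lf t p = 0 := by linarith
    rcases mul_eq_zero.mp h3 with h4 | h4
    · exact absurd h4 (eps_ne_zero p₀ t)
    · exact h4

lemma PP_dot {t : ℤ × ℤ × ℤ} (ht : t ∈ TT m n) {p : ℝ × ℝ} (hp : p ∈ PP m n p₀) :
    sc p₀ t ≤ dot (sg p₀ t) p := by
  have := hp t ht
  rw [eps_lf_eq] at this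
  linarith

/-- a constraint supporting a (possibly degenerate) edge of the cell -/
def IsEdge (t : ℤ × ℤ × ℤ) : Prop :=
  t ∈ TT m n ∧ ∃ p q : ℝ × ℝ, p ∈ PP m n p₀ ∧ q ∈ PP m n p₀ ∧ p ≠ q ∧
    lf t p = 0 ∧ lf t q = 0

/-- the integer difference triple of two signed constraints -/
def tdiff (t1 t2 : ℤ × ℤ × ℤ) : ℤ × ℤ × ℤ :=
  (epsZ p₀ t1 * t1.1 - epsZ p₀ t2 * t2.1,
   epsZ p₀ t1 * t1.2.1 - epsZ p₀ t2 * t2.2.1,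
   epsZ p₀ t1 * t1.2.2 - epsZ p₀ t2 * t2.2.2)

lemma lf_tdiff (t1 t2 : ℤ × ℤ × ℤ) (p : ℝ × ℝ) :
    lf (tdiff p₀ t1 t2) p = (dot (sg p₀ t1) p - sc p₀ t1) - (dot (sg p₀ t2) p - sc p₀ t2) := by
  simp only [tdiff, lf, dot, sg, sc, nr, Prod.smul_fst, Prod.smul_snd, smul_eq_mul]
  push_cast [epsZ_cast]
  ring

/-- two distinct-sign-quadrant... : two edges whose signed normals lie in the same
quadrant support the same line. -/
lemma edge_lines_eq (hm : 0 < m) (hn : 0 < n) (hp₀ : p₀ ∈ FareyComplex m n)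
    {t1 t2 : ℤ × ℤ × ℤ} (h1 : IsEdge m n p₀ t1) (h2 : IsEdge m n p₀ t2)
    (hq : q4 (sg p₀ t1) = q4 (sg p₀ t2)) :
    ∀ p : ℝ × ℝ, lf t1 p = 0 ↔ lf t2 p = 0 := by
  obtain ⟨ht1, pa, qa, hpa, hqa, hnea, hza, hza'⟩ := h1
  obtain ⟨ht2, pb, qb, hpb, hqb, hneb, hzb, hzb'⟩ := h2
  by_cases hdep : det2 (sg p₀ t1) (sg p₀ t2) = 0
  · obtain ⟨μ, hμ⟩ := exists_smul_of_det2_eq_zero hdep (sg_ne_zero m n p₀ ht1)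
    have hμpos : 0 < μ := smul_same_q4_pos (sg_ne_zero m n p₀ ht1) (sg_ne_zero m n p₀ ht2) hq hμ
    have hc : sc p₀ t2 = μ * sc p₀ t1 := by
      have k1 : sc p₀ t2 ≤ dot (sg p₀ t2) pa := PP_dot m n p₀ ht2 hpa
      rw [hμ, dot_smul_left, (lf_zero_iff_dot p₀ pa).mp hza] at k1
      have k2 : sc p₀ t1 ≤ dot (sg p₀ t1) pb := PP_dot m n p₀ ht1 hpb
      have k3 : dot (sg p₀ t2) pb = sc p₀ t2 := (lf_zero_iff_dot p₀ pb).mp hzb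
      rw [hμ, dot_smul_left] at k3
      nlinarith
    intro p
    rw [lf_zero_iff_dot p₀ p, lf_zero_iff_dot p₀ p, hμ, dot_smul_left, hc]
    constructor
    · intro h; rw [h]
    · intro h; exact mul_left_cancel₀ hμpos.ne' h
  · -- independent normals: contradiction
    exfalso
    -- a point of PP on line t1 but not on line t2
    obtain ⟨x1, hx1P, hx1z, hx1nz⟩ : ∃ x, x ∈ PP m n p₀ ∧ lf t1 x = 0 ∧ lf t2 x ≠ 0 := by
      by_cases h : lf t2 pa = 0
      · refine ⟨qa, hqa, hza', fun h' => ?_⟩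
        have d1 : dot (sg p₀ t1) (pa - qa) = 0 := by
          rw [dot_sub_right, (lf_zero_iff_dot p₀ pa).mp hza, (lf_zero_iff_dot p₀ qa).mp hza',
            sub_self]
        have d2 : dot (sg p₀ t2) (pa - qa) = 0 := by
          rw [dot_sub_right, (lf_zero_iff_dot p₀ pa).mp h, (lf_zero_iff_dot p₀ qa).mp h',
            sub_self]
        exact hnea (sub_eq_zero.mp (eq_zero_of_perp_two hdep d1 d2))
      · exact ⟨pa, hpa, hza, h⟩
    obtain ⟨x2, hx2P, hx2z, hx2nz⟩ : ∃ x, x ∈ PP m n p₀ ∧ lf t2 x = 0 ∧ lf t1 x ≠ 0 := by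
      by_cases h : lf t1 pb = 0
      · refine ⟨qb, hqb, hzb', fun h' => ?_⟩
        have d1 : dot (sg p₀ t1) (pb - qb) = 0 := by
          rw [dot_sub_right, (lf_zero_iff_dot p₀ pb).mp h, (lf_zero_iff_dot p₀ qb).mp h',
            sub_self]
        have d2 : dot (sg p₀ t2) (pb - qb) = 0 := by
          rw [dot_sub_right, (lf_zero_iff_dot p₀ pb).mp hzb, (lf_zero_iff_dot p₀ qb).mp hzb',
            sub_self]
        exact hneb (sub_eq_zero.mp (eq_zero_of_perp_two hdep d1 d2))
      · exact ⟨pb, hpb, hzb, h⟩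
    set t := tdiff p₀ t1 t2 with htdef
    have hcast1 : ((t.1 : ℤ) : ℝ) = (sg p₀ t1).1 - (sg p₀ t2).1 := by
      rw [htdef]; simp only [tdiff, sg_fst]; push_cast [epsZ_cast]; ring
    have hcast2 : ((t.2.1 : ℤ) : ℝ) = (sg p₀ t1).2 - (sg p₀ t2).2 := by
      rw [htdef]; simp only [tdiff, sg_snd]; push_cast [epsZ_cast]; ring
    -- strict signs of lf t at x1 and x2
    have hv1 : lf t x1 < 0 := by
      rw [htdef, lf_tdiff]
      have e1 : dot (sg p₀ t1) x1 = sc p₀ t1 := (lf_zero_iff_dot p₀ x1).mp hx1z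
      have e2 : sc p₀ t2 ≤ dot (sg p₀ t2) x1 := PP_dot m n p₀ ht2 hx1P
      have e3 : dot (sg p₀ t2) x1 ≠ sc p₀ t2 := fun h => hx1nz ((lf_zero_iff_dot p₀ x1).mpr h)
      have e4 : sc p₀ t2 < dot (sg p₀ t2) x1 := lt_of_le_of_ne e2 (Ne.symm e3)
      linarith
    have hv2 : 0 < lf t x2 := by
      rw [htdef, lf_tdiff]
      have e1 : dot (sg p₀ t2) x2 = sc p₀ t2 := (lf_zero_iff_dot p₀ x2).mp hx2z
      have e2 : sc p₀ t1 ≤ dot (sg p₀ t1) x2 := PP_dot m n p₀ ht1 hx2P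
      have e3 : dot (sg p₀ t1) x2 ≠ sc p₀ t1 := fun h => hx2nz ((lf_zero_iff_dot p₀ x2).mpr h)
      have e4 : sc p₀ t1 < dot (sg p₀ t1) x2 := lt_of_le_of_ne e2 (Ne.symm e3)
      linarith
    -- the zero point on the segment, used to bound the constant coefficient
    have hbnds := same_q4_bounds (sg_ne_zero m n p₀ ht1) (sg_ne_zero m n p₀ ht2) hq
      (abs_sg_fst m n p₀ ht1) (abs_sg_fst m n p₀ ht2)
      (abs_sg_snd m n p₀ ht1) (abs_sg_snd m n p₀ ht2)
    have habs1 : |((t.1 : ℤ) : ℝ)| ≤ (m : ℝ) := by rw [hcast1]; exact hbnds.1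
    have habs2 : |((t.2.1 : ℤ) : ℝ)| ≤ (n : ℝ) := by rw [hcast2]; exact hbnds.2
    have hTT : t ∈ TT m n := by
      rw [mem_TT]
      refine ⟨?_, ?_, ?_, ?_⟩
      · exact_mod_cast (by push_cast; exact habs1 : |((t.1:ℤ):ℝ)| ≤ (((m:ℤ)):ℝ))
      · exact_mod_cast (by push_cast; exact habs2 : |((t.2.1:ℤ):ℝ)| ≤ (((n:ℤ)):ℝ))
      · -- bound on the constant via a zero point of lf t in the unit square
        set s := lf t x1 / (lf t x1 - lf t x2) with hsdef
        have hden : lf t x1 - lf t x2 < 0 := by linarith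
        have hs0 : 0 < s := div_pos_of_neg_of_neg hv1 hden
        have hs1 : s < 1 := by rw [hsdef, div_lt_one_of_neg hden]; linarith
        have hzP : (1 - s) • x1 + s • x2 ∈ PP m n p₀ :=
          convex_PP m n p₀ hx1P hx2P (by linarith) hs0.le (by ring)
        have hz0 : lf t ((1 - s) • x1 + s • x2) = 0 := by
          rw [lf_combo t x1 x2 (by ring : (1-s) + s = 1)]
          have hmc : s * (lf t x1 - lf t x2) = lf t x1 := div_mul_cancel₀ _ hden.ne
          linear_combination -hmc
        set z := (1 - s) • x1 + s • x2 with hzdef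
        have hzS : z ∈ unitSquare := PP_subset_square m n p₀ hm hn hp₀ hzP
        have hz1 : 0 ≤ z.1 ∧ z.1 ≤ 1 := ⟨hzS.1.1, hzS.2.1⟩
        have hz2 : 0 ≤ z.2 ∧ z.2 ≤ 1 := ⟨hzS.1.2, hzS.2.2⟩
        have hw : ((t.2.2 : ℤ) : ℝ) = (t.1 : ℝ) * z.1 + (t.2.1 : ℝ) * z.2 := by
          have := hz0
          simp only [lf] at this
          linarith
        have : |((t.2.2 : ℤ) : ℝ)| ≤ (m : ℝ) + n := by
          rw [hw]
          calc |(t.1 : ℝ) * z.1 + (t.2.1 : ℝ) * z.2|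
              ≤ |(t.1 : ℝ) * z.1| + |(t.2.1 : ℝ) * z.2| := abs_add_le _ _
            _ = |(t.1 : ℝ)| * |z.1| + |(t.2.1 : ℝ)| * |z.2| := by rw [abs_mul, abs_mul]
            _ ≤ |(t.1 : ℝ)| * 1 + |(t.2.1 : ℝ)| * 1 := by
                gcongr
                · rw [abs_of_nonneg hz1.1]; exact hz1.2
                · rw [abs_of_nonneg hz2.1]; exact hz2.2
            _ ≤ (m : ℝ) + n := by rw [mul_one, mul_one]; exact add_le_add habs1 habs2
        exact_mod_cast (by push_cast; exact this : |((t.2.2:ℤ):ℝ)| ≤ (((m:ℤ)+n):ℝ))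
      · rintro ⟨e1, e2⟩
        apply hdep
        have g1 : (sg p₀ t1).1 = (sg p₀ t2).1 := by
          have : ((t.1 : ℤ) : ℝ) = 0 := by rw [e1]; norm_num
          rw [hcast1] at this; linarith
        have g2 : (sg p₀ t1).2 = (sg p₀ t2).2 := by
          have : ((t.2.1 : ℤ) : ℝ) = 0 := by rw [e2]; norm_num
          rw [hcast2] at this; linarith
        have : sg p₀ t1 = sg p₀ t2 := Prod.ext g1 g2
        rw [this]
        exact det2_self _
    exact no_sign_change m n p₀ hp₀ hTT hx1P hx2P hv1 hv2

lemma eps_lf_add (t : ℤ × ℤ × ℤ) (x w : ℝ × ℝ) :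
    eps p₀ t * lf t (x + w) = eps p₀ t * lf t x + dot (sg p₀ t) w := by
  rw [lf_add, mul_add, sg, dot_smul_left]

lemma TT_nonempty (hm : 0 < m) (hn : 0 < n) : ((1:ℤ),(0:ℤ),(0:ℤ)) ∈ TT m n :=
  (coordinate_triples_mem m n hm hn).1

/-- one can move a little inside `PP` along any direction compatible with the
active constraints -/
lemma step_mem_PP (hm : 0 < m) (hn : 0 < n) (hp₀ : p₀ ∈ FareyComplex m n)
    {x : ℝ × ℝ} (hx : x ∈ PP m n p₀) (d : ℝ × ℝ)
    (hd : ∀ t ∈ TT m n, lf t x = 0 → 0 ≤ dot (sg p₀ t) d) :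
    ∃ δ : ℝ, 0 < δ ∧ x + δ • d ∈ PP m n p₀ := by
  classical
  set ρ : (ℤ × ℤ × ℤ) → ℝ := fun t =>
    if dot (sg p₀ t) d < 0 then (eps p₀ t * lf t x) / (-(dot (sg p₀ t) d)) else 1 with hρ
  have hρpos : ∀ t ∈ TT m n, 0 < ρ t := by
    intro t ht
    rw [hρ]
    dsimp only
    split_ifs with hneg
    · have hne : lf t x ≠ 0 := by
        intro h0
        exact absurd (hd t ht h0) (not_le.mpr hneg)
      have h1 : 0 ≤ eps p₀ t * lf t x := hx t ht
      have h2 : eps p₀ t * lf t x ≠ 0 := mul_ne_zero (eps_ne_zero p₀ t) hne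
      exact div_pos (lt_of_le_of_ne h1 (Ne.symm h2)) (by linarith)
    · norm_num
  obtain ⟨t₀, ht₀, hmin⟩ := (TT m n).exists_min_image ρ ⟨_, TT_nonempty m n hm hn⟩
  refine ⟨ρ t₀, hρpos t₀ ht₀, ?_⟩
  intro t ht
  rw [eps_lf_add]
  rcases le_or_gt 0 (dot (sg p₀ t) d) with hge | hlt
  · have := hx t ht
    have h2 : 0 ≤ ρ t₀ * dot (sg p₀ t) d := mul_nonneg (hρpos t₀ ht₀).le hge
    rw [dot_smul_right]
    linarith
  · have hle : ρ t₀ ≤ ρ t := hmin t ht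
    have hρt : ρ t = (eps p₀ t * lf t x) / (-(dot (sg p₀ t) d)) := by
      rw [hρ]; dsimp only; rw [if_pos hlt]
    have h3 : ρ t₀ * (-(dot (sg p₀ t) d)) ≤ eps p₀ t * lf t x := by
      rw [hρt] at hle
      calc ρ t₀ * (-(dot (sg p₀ t) d))
          ≤ ((eps p₀ t * lf t x) / (-(dot (sg p₀ t) d))) * (-(dot (sg p₀ t) d)) := by
            apply mul_le_mul_of_nonneg_right hle (by linarith)
        _ = eps p₀ t * lf t x := div_mul_cancel₀ _ (by linarith)
    rw [dot_smul_right]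
    linarith

/-- at an extreme point the active constraints span the plane -/
lemma extreme_spanning (hm : 0 < m) (hn : 0 < n) (hp₀ : p₀ ∈ FareyComplex m n)
    {x : ℝ × ℝ} (hx : x ∈ Set.extremePoints ℝ (PP m n p₀)) :
    ∃ ta ∈ TT m n, ∃ tb ∈ TT m n, lf ta x = 0 ∧ lf tb x = 0 ∧
      det2 (sg p₀ ta) (sg p₀ tb) ≠ 0 := by
  classical
  by_contra hcon
  push_neg at hcon
  have hxP := hx.1
  -- produce a direction orthogonal to all active constraints
  obtain ⟨d, hdne, hdperp⟩ : ∃ d : ℝ × ℝ, d ≠ 0 ∧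
      ∀ t ∈ TT m n, lf t x = 0 → dot (sg p₀ t) d = 0 := by
    by_cases hA : ∃ t0 ∈ TT m n, lf t0 x = 0
    · obtain ⟨t0, ht0, hz0⟩ := hA
      refine ⟨rot (sg p₀ t0), rot_ne_zero (sg_ne_zero m n p₀ ht0), ?_⟩
      intro t ht hz
      rw [dot_rot]
      exact hcon t0 ht0 t ht hz0 hz
    · push_neg at hA
      exact ⟨(1, 0), by simp [Prod.ext_iff], fun t ht hz => absurd hz (hA t ht)⟩
  obtain ⟨δ1, hδ1, hy1⟩ := step_mem_PP m n p₀ hm hn hp₀ hxP d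
    (fun t ht hz => (hdperp t ht hz).ge)
  obtain ⟨δ2, hδ2, hy2⟩ := step_mem_PP m n p₀ hm hn hp₀ hxP (-d)
    (fun t ht hz => by rw [dot_neg_right, hdperp t ht hz, neg_zero])
  have hy2' : x + δ2 • (-d) = x + (-δ2) • d := by module
  rw [hy2'] at hy2
  have hmid : x ∈ openSegment ℝ (x + (-δ2) • d) (x + δ1 • d) :=
    mem_openSegment_middle (by linarith) hδ1
  have := hx.2 hy2 hy1 hmid
  have h0 : (-δ2) • d = 0 := by
    have := congrArg (fun z => z - x) this
    simpa [add_sub_cancel_left] using this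
  rcases smul_eq_zero.mp h0 with h | h
  · linarith [neg_eq_zero.mp h]
  · exact hdne h

/-- sweeping: a feasible direction on which some active constraint vanishes -/
lemma exists_edge_dir (hp₀ : p₀ ∈ FareyComplex m n) {x dh : ℝ × ℝ} (r : ℝ × ℝ)
    (hAne : ∃ t0 ∈ TT m n, lf t0 x = 0)
    (hpos : ∀ t ∈ TT m n, lf t x = 0 → 0 < dot (sg p₀ t) dh) :
    ∃ t1 ∈ TT m n, lf t1 x = 0 ∧ ∃ s : ℝ,
      (∀ t ∈ TT m n, lf t x = 0 → 0 ≤ dot (sg p₀ t) (r - s • dh)) ∧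
      dot (sg p₀ t1) (r - s • dh) = 0 := by
  classical
  set A : Finset (ℤ × ℤ × ℤ) := (TT m n).filter (fun t => lf t x = 0) with hA
  have hAne' : A.Nonempty := by
    obtain ⟨t0, ht0, hz0⟩ := hAne
    exact ⟨t0, Finset.mem_filter.mpr ⟨ht0, hz0⟩⟩
  obtain ⟨t1, ht1, hmin⟩ := A.exists_min_image
    (fun t => dot (sg p₀ t) r / dot (sg p₀ t) dh) hAne'
  obtain ⟨ht1T, ht1z⟩ := Finset.mem_filter.mp ht1
  set s := dot (sg p₀ t1) r / dot (sg p₀ t1) dh with hs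
  refine ⟨t1, ht1T, ht1z, s, ?_, ?_⟩
  · intro t ht hz
    have htA : t ∈ A := Finset.mem_filter.mpr ⟨ht, hz⟩
    have hdt : 0 < dot (sg p₀ t) dh := hpos t ht hz
    have hle : s ≤ dot (sg p₀ t) r / dot (sg p₀ t) dh := hmin t htA
    rw [dot_sub_right, dot_smul_right]
    have := (div_le_div_iff_of_pos_right hdt).mpr hle
    have h2 : s * dot (sg p₀ t) dh ≤ dot (sg p₀ t) r := by
      calc s * dot (sg p₀ t) dh
          ≤ (dot (sg p₀ t) r / dot (sg p₀ t) dh) * dot (sg p₀ t) dh :=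
            mul_le_mul_of_nonneg_right hle hdt.le
        _ = dot (sg p₀ t) r := div_mul_cancel₀ _ hdt.ne'
    linarith
  · have hdt : 0 < dot (sg p₀ t1) dh := hpos t1 ht1T ht1z
    rw [dot_sub_right, dot_smul_right, hs, div_mul_cancel₀ _ hdt.ne', sub_self]


/-- every extreme point of the cell lies on two independent edge lines -/
lemma extreme_two_edges (hm : 0 < m) (hn : 0 < n) (hp₀ : p₀ ∈ FareyComplex m n)
    {x : ℝ × ℝ} (hx : x ∈ Set.extremePoints ℝ (PP m n p₀)) :
    ∃ t1 t2 : ℤ × ℤ × ℤ, IsEdge m n p₀ t1 ∧ IsEdge m n p₀ t2 ∧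
      lf t1 x = 0 ∧ lf t2 x = 0 ∧ det2 (sg p₀ t1) (sg p₀ t2) ≠ 0 := by
  have hxP := hx.1
  obtain ⟨ta, hta, tb, htb, hza, hzb, hdet⟩ := extreme_spanning m n p₀ hm hn hp₀ hx
  set dh := p₀ - x with hdh
  have hdhne : dh ≠ 0 := by
    rw [hdh, sub_ne_zero]
    intro h
    exact lf_p₀_ne m n p₀ hp₀ hta (h ▸ hza)
  have hdpos : ∀ t ∈ TT m n, lf t x = 0 → 0 < dot (sg p₀ t) dh := by
    intro t ht hz
    rw [hdh, dot_sub_right]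
    have h1 : dot (sg p₀ t) x = sc p₀ t := (lf_zero_iff_dot p₀ x).mp hz
    have h2 := eps_lf_p₀_pos m n p₀ hp₀ ht
    rw [eps_lf_eq] at h2
    linarith
  have hAne : ∃ t0 ∈ TT m n, lf t0 x = 0 := ⟨ta, hta, hza⟩
  have hD : 0 < det2 dh (rot dh) := by rw [det2_rot_self]; exact sq_pos_of_ne_zero hdhne
  obtain ⟨t1, ht1T, ht1z, s1, hfeas1, hzero1⟩ :=
    exists_edge_dir m n p₀ hp₀ (rot dh) hAne hdpos
  obtain ⟨t2, ht2T, ht2z, s2, hfeas2, hzero2⟩ :=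
    exists_edge_dir m n p₀ hp₀ (-rot dh) hAne hdpos
  set d1 := rot dh - s1 • dh with hd1
  set d2 := -rot dh - s2 • dh with hd2
  have hDd1 : det2 dh d1 = det2 dh (rot dh) := by
    rw [hd1, det2_sub_smul, det2_self, mul_zero, sub_zero]
  have hDd2 : det2 dh d2 = -det2 dh (rot dh) := by
    rw [hd2, det2_negsub_smul, det2_self, mul_zero, sub_zero]
  have hd1ne : d1 ≠ 0 := by
    intro h
    rw [h, det2] at hDd1
    simp at hDd1
    linarith [hD, hDd1]
  have hd2ne : d2 ≠ 0 := by
    intro h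
    rw [h, det2] at hDd2
    simp at hDd2
    linarith [hD, hDd2]
  -- independence of the two stopping constraints
  have hdet12 : det2 (sg p₀ t1) (sg p₀ t2) ≠ 0 := by
    intro hdep
    obtain ⟨μ, hμ⟩ := exists_smul_of_det2_eq_zero hdep (sg_ne_zero m n p₀ ht1T)
    have hμne : μ ≠ 0 := by
      intro h
      rw [h, zero_smul] at hμ
      exact sg_ne_zero m n p₀ ht2T hμ
    have hperp2 : dot (sg p₀ t1) d2 = 0 := by
      have := hzero2
      rw [hμ, dot_smul_left] at this
      rcases mul_eq_zero.mp this with h | h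
      · exact absurd h hμne
      · exact h
    have hdd : det2 d1 d2 = 0 :=
      det2_eq_zero_of_perp (sg_ne_zero m n p₀ ht1T) hzero1 hperp2
    obtain ⟨ν, hν⟩ := exists_smul_of_det2_eq_zero hdd hd1ne
    have hνval : ν = -1 := by
      have e1 : det2 dh d2 = ν * det2 dh d1 := by
        rw [hν]
        simp [det2, Prod.smul_fst, Prod.smul_snd, smul_eq_mul]
        ring
      rw [hDd1, hDd2] at e1
      have := hD
      nlinarith
    have hall : ∀ t ∈ TT m n, lf t x = 0 → dot (sg p₀ t) d1 = 0 := by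
      intro t ht hz
      have h1 := hfeas1 t ht hz
      have h2 := hfeas2 t ht hz
      rw [hν, hνval, dot_smul_right] at h2
      linarith
    exact hd1ne (eq_zero_of_perp_two hdet (hall ta hta hza) (hall tb htb hzb))
  -- witnesses on the two lines
  obtain ⟨δ1, hδ1pos, hy1P⟩ := step_mem_PP m n p₀ hm hn hp₀ hxP d1 hfeas1
  obtain ⟨δ2, hδ2pos, hy2P⟩ := step_mem_PP m n p₀ hm hn hp₀ hxP d2 hfeas2
  have hy1z : lf t1 (x + δ1 • d1) = 0 := by
    have h := eps_lf_add p₀ t1 x (δ1 • d1)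
    rw [dot_smul_right, hzero1, ht1z, mul_zero, mul_zero, add_zero] at h
    rcases mul_eq_zero.mp h with h' | h'
    · exact absurd h' (eps_ne_zero p₀ t1)
    · exact h'
  have hy2z : lf t2 (x + δ2 • d2) = 0 := by
    have h := eps_lf_add p₀ t2 x (δ2 • d2)
    rw [dot_smul_right, hzero2, ht2z, mul_zero, mul_zero, add_zero] at h
    rcases mul_eq_zero.mp h with h' | h'
    · exact absurd h' (eps_ne_zero p₀ t2)
    · exact h'
  have hy1ne : x ≠ x + δ1 • d1 := by
    intro h
    have : δ1 • d1 = 0 := by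
      have := congrArg (fun z => z - x) h
      simpa using this.symm
    rcases smul_eq_zero.mp this with h' | h'
    · linarith
    · exact hd1ne h'
  have hy2ne : x ≠ x + δ2 • d2 := by
    intro h
    have : δ2 • d2 = 0 := by
      have := congrArg (fun z => z - x) h
      simpa using this.symm
    rcases smul_eq_zero.mp this with h' | h'
    · linarith
    · exact hd2ne h'
  exact ⟨t1, t2, ⟨ht1T, x, x + δ1 • d1, hxP, hy1P, hy1ne, ht1z, hy1z⟩,
    ⟨ht2T, x, x + δ2 • d2, hxP, hy2P, hy2ne, ht2z, hy2z⟩, ht1z, ht2z, hdet12⟩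

lemma det2_sg_nr (t1 t2 : ℤ × ℤ × ℤ) :
    det2 (sg p₀ t1) (sg p₀ t2) = eps p₀ t1 * eps p₀ t2 * det2 (nr t1) (nr t2) := by
  simp [det2, sg, Prod.smul_fst, Prod.smul_snd, smul_eq_mul]
  ring

/-- the intersection point of the lines of two triples (Cramer) -/
def solPt (tp : (ℤ × ℤ × ℤ) × (ℤ × ℤ × ℤ)) : ℝ × ℝ :=
  (((tp.1.2.2 : ℝ) * (tp.2.2.1 : ℝ) - (tp.2.2.2 : ℝ) * (tp.1.2.1 : ℝ)) / det2 (nr tp.1) (nr tp.2),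
   ((tp.1.1 : ℝ) * (tp.2.2.2 : ℝ) - (tp.2.1 : ℝ) * (tp.1.2.2 : ℝ)) / det2 (nr tp.1) (nr tp.2))

lemma solPt_eq {t1 t2 : ℤ × ℤ × ℤ} {x : ℝ × ℝ} (hdet : det2 (nr t1) (nr t2) ≠ 0)
    (h1 : lf t1 x = 0) (h2 : lf t2 x = 0) : x = solPt (t1, t2) := by
  simp only [lf] at h1 h2
  have hd : det2 (nr t1) (nr t2) = (t1.1 : ℝ) * (t2.2.1 : ℝ) - (t1.2.1 : ℝ) * (t2.1 : ℝ) := by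
    simp [det2, nr]
  ext
  · show x.1 = _
    rw [solPt]
    rw [eq_div_iff hdet, hd]
    linear_combination (t2.2.1 : ℝ) * h1 - (t1.2.1 : ℝ) * h2
  · show x.2 = _
    rw [solPt]
    rw [eq_div_iff hdet, hd]
    linear_combination (-(t2.1 : ℝ)) * h1 + (t1.1 : ℝ) * h2

lemma finite_extremePoints (hm : 0 < m) (hn : 0 < n) (hp₀ : p₀ ∈ FareyComplex m n) :
    (Set.extremePoints ℝ (PP m n p₀)).Finite := by
  apply Set.Finite.subset (((TT m n) ×ˢ (TT m n)).finite_toSet.image solPt)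
  intro x hx
  obtain ⟨t1, t2, he1, he2, hz1, hz2, hdet⟩ := extreme_two_edges m n p₀ hm hn hp₀ hx
  have hdet' : det2 (nr t1) (nr t2) ≠ 0 := by
    intro h
    rw [det2_sg_nr, h, mul_zero] at hdet
    exact hdet rfl
  exact ⟨(t1, t2), by
    simp only [Finset.coe_product, Set.mem_prod, Finset.mem_coe]
    exact ⟨he1.1, he2.1⟩, (solPt_eq hdet' hz1 hz2).symm⟩

/-- three distinct extreme points cannot lie on one constraint line -/
lemma collinear_extreme (hp₀ : p₀ ∈ FareyComplex m n) {t : ℤ × ℤ × ℤ} (ht : t ∈ TT m n)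
    {x y z : ℝ × ℝ} (hx : x ∈ Set.extremePoints ℝ (PP m n p₀))
    (hy : y ∈ Set.extremePoints ℝ (PP m n p₀)) (hz : z ∈ Set.extremePoints ℝ (PP m n p₀))
    (hxy : x ≠ y) (hxz : x ≠ z) (hyz : y ≠ z)
    (h1 : lf t x = 0) (h2 : lf t y = 0) (h3 : lf t z = 0) : False := by
  have ha : sg p₀ t ≠ 0 := sg_ne_zero m n p₀ ht
  have d1 : dot (sg p₀ t) (y - x) = 0 := by
    rw [dot_sub_right, (lf_zero_iff_dot p₀ y).mp h2, (lf_zero_iff_dot p₀ x).mp h1, sub_self]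
  have d2 : dot (sg p₀ t) (z - x) = 0 := by
    rw [dot_sub_right, (lf_zero_iff_dot p₀ z).mp h3, (lf_zero_iff_dot p₀ x).mp h1, sub_self]
  obtain ⟨s1, hs1⟩ := perp_decomp ha d1
  obtain ⟨s2, hs2⟩ := perp_decomp ha d2
  have hy' : y = x + s1 • rot (sg p₀ t) := by rw [← hs1]; abel
  have hz' : z = x + s2 • rot (sg p₀ t) := by rw [← hs2]; abel
  rcases three_collinear hy' hz' hxy hxz hyz with hc | hc | hc
  · obtain e1 := hx.2 hy.1 hz.1 hc
    exact hxy e1.symm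
  · obtain e1 := hy.2 hx.1 hz.1 hc
    exact hxy e1
  · obtain e1 := hz.2 hx.1 hy.1 hc
    exact hxz e1

lemma q4_ne_of_indep (hm : 0 < m) (hn : 0 < n) (hp₀ : p₀ ∈ FareyComplex m n)
    {t1 t2 : ℤ × ℤ × ℤ} (he1 : IsEdge m n p₀ t1) (he2 : IsEdge m n p₀ t2)
    {x : ℝ × ℝ} (hz1 : lf t1 x = 0) (hz2 : lf t2 x = 0)
    (hdet : det2 (sg p₀ t1) (sg p₀ t2) ≠ 0) :
    q4 (sg p₀ t1) ≠ q4 (sg p₀ t2) := by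
  intro heq
  have hlines := edge_lines_eq m n p₀ hm hn hp₀ he1 he2 heq
  set p' := x + rot (sg p₀ t1) with hp'
  have hp'1 : lf t1 p' = 0 := by
    have h := eps_lf_add p₀ t1 x (rot (sg p₀ t1))
    rw [dot_rot, det2_self, hz1, mul_zero, add_zero] at h
    rcases mul_eq_zero.mp h with h' | h'
    · exact absurd h' (eps_ne_zero p₀ t1)
    · exact h'
  have hp'2 : lf t2 p' = 0 := (hlines p').mp hp'1
  have h := eps_lf_add p₀ t2 x (rot (sg p₀ t1))
  rw [hp'2, hz2, mul_zero, zero_add] at h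
  exact hdet ((dot_rot (sg p₀ t1) (sg p₀ t2)).symm.trans h.symm)

lemma card_extreme_le_four (hm : 0 < m) (hn : 0 < n) (hp₀ : p₀ ∈ FareyComplex m n) :
    (finite_extremePoints m n p₀ hm hn hp₀).toFinset.card ≤ 4 := by
  classical
  have H : ∀ x ∈ Set.extremePoints ℝ (PP m n p₀), ∃ t1 t2 : ℤ × ℤ × ℤ,
      IsEdge m n p₀ t1 ∧ IsEdge m n p₀ t2 ∧ lf t1 x = 0 ∧ lf t2 x = 0 ∧
      det2 (sg p₀ t1) (sg p₀ t2) ≠ 0 :=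
    fun x hx => extreme_two_edges m n p₀ hm hn hp₀ hx
  choose! f1 f2 hE1 hE2 hz1 hz2 hdet using H
  set S := (finite_extremePoints m n p₀ hm hn hp₀).toFinset with hS
  have hSmem : ∀ x, x ∈ S ↔ x ∈ Set.extremePoints ℝ (PP m n p₀) := by
    intro x; rw [hS, Set.Finite.mem_toFinset]
  have key : ∀ c : Fin 4,
      (S.filter (fun x => q4 (sg p₀ (f1 x)) = c ∨ q4 (sg p₀ (f2 x)) = c)).card ≤ 2 := by
    intro c
    by_contra hcon
    push_neg at hcon
    set F := S.filter (fun x => q4 (sg p₀ (f1 x)) = c ∨ q4 (sg p₀ (f2 x)) = c) with hF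
    have h3 : 3 ≤ F.card := hcon
    obtain ⟨x, hxF⟩ := Finset.card_pos.mp (show 0 < F.card by omega)
    have h2 : 2 ≤ (F.erase x).card := by
      have := Finset.card_erase_of_mem hxF; omega
    obtain ⟨y, hyF'⟩ := Finset.card_pos.mp (by omega : 0 < (F.erase x).card)
    have hyx : y ≠ x := (Finset.mem_erase.mp hyF').1
    have hyF : y ∈ F := (Finset.mem_erase.mp hyF').2
    have h1 : 1 ≤ ((F.erase x).erase y).card := by
      have := Finset.card_erase_of_mem hyF'; omega
    obtain ⟨z, hzF'⟩ := Finset.card_pos.mp (by omega : 0 < ((F.erase x).erase y).card)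
    have hzy : z ≠ y := (Finset.mem_erase.mp hzF').1
    have hzx : z ≠ x := (Finset.mem_erase.mp (Finset.mem_erase.mp hzF').2).1
    have hzF : z ∈ F := (Finset.mem_erase.mp (Finset.mem_erase.mp hzF').2).2
    have hget : ∀ w ∈ F, w ∈ Set.extremePoints ℝ (PP m n p₀) ∧
        ∃ tw : ℤ × ℤ × ℤ, IsEdge m n p₀ tw ∧ lf tw w = 0 ∧ q4 (sg p₀ tw) = c := by
      intro w hw
      obtain ⟨hwS, hwq⟩ := Finset.mem_filter.mp hw
      have hwE := (hSmem w).mp hwS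
      refine ⟨hwE, ?_⟩
      rcases hwq with h | h
      · exact ⟨f1 w, hE1 w hwE, hz1 w hwE, h⟩
      · exact ⟨f2 w, hE2 w hwE, hz2 w hwE, h⟩
    obtain ⟨hxE, tx, hEx, hzxx, hqx⟩ := hget x hxF
    obtain ⟨hyE, ty, hEy, hzyy, hqy⟩ := hget y hyF
    obtain ⟨hzE, tz, hEz, hzzz, hqz⟩ := hget z hzF
    have hlxy := edge_lines_eq m n p₀ hm hn hp₀ hEx hEy (hqx.trans hqy.symm)
    have hlxz := edge_lines_eq m n p₀ hm hn hp₀ hEx hEz (hqx.trans hqz.symm)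
    exact collinear_extreme m n p₀ hp₀ hEx.1 hxE hyE hzE hyx.symm hzx.symm hzy.symm
      hzxx ((hlxy y).mpr hzyy) ((hlxz z).mpr hzzz)
  have hcount : 2 * S.card ≤ 8 := by
    have e1 : 2 * S.card = ∑ x ∈ S, (2 : ℕ) := by
      rw [Finset.sum_const, smul_eq_mul, mul_comm]
    have e2 : ∀ x ∈ S, (2 : ℕ) =
        (Finset.univ.filter
          (fun c : Fin 4 => q4 (sg p₀ (f1 x)) = c ∨ q4 (sg p₀ (f2 x)) = c)).card := by
      intro x hx
      have hxE := (hSmem x).mp hx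
      have hne : q4 (sg p₀ (f1 x)) ≠ q4 (sg p₀ (f2 x)) :=
        q4_ne_of_indep m n p₀ hm hn hp₀ (hE1 x hxE) (hE2 x hxE) (hz1 x hxE) (hz2 x hxE)
          (hdet x hxE)
      have : Finset.univ.filter
          (fun c : Fin 4 => q4 (sg p₀ (f1 x)) = c ∨ q4 (sg p₀ (f2 x)) = c) =
          {q4 (sg p₀ (f1 x)), q4 (sg p₀ (f2 x))} := by
        ext c
        simp [eq_comm]
      rw [this, Finset.card_pair hne]
    calc 2 * S.card = ∑ x ∈ S, (2:ℕ) := e1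
      _ = ∑ x ∈ S, (Finset.univ.filter
            (fun c : Fin 4 => q4 (sg p₀ (f1 x)) = c ∨ q4 (sg p₀ (f2 x)) = c)).card :=
          Finset.sum_congr rfl e2
      _ = ∑ x ∈ S, ∑ c ∈ (Finset.univ : Finset (Fin 4)),
            if q4 (sg p₀ (f1 x)) = c ∨ q4 (sg p₀ (f2 x)) = c then 1 else 0 := by
          refine Finset.sum_congr rfl fun x _ => ?_
          rw [Finset.card_filter]
      _ = ∑ c ∈ (Finset.univ : Finset (Fin 4)), ∑ x ∈ S,
            if q4 (sg p₀ (f1 x)) = c ∨ q4 (sg p₀ (f2 x)) = c then 1 else 0 :=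
          Finset.sum_comm
      _ = ∑ c ∈ (Finset.univ : Finset (Fin 4)),
            (S.filter (fun x => q4 (sg p₀ (f1 x)) = c ∨ q4 (sg p₀ (f2 x)) = c)).card := by
          refine Finset.sum_congr rfl fun c _ => ?_
          rw [Finset.card_filter]
      _ ≤ ∑ c ∈ (Finset.univ : Finset (Fin 4)), 2 := Finset.sum_le_sum fun c _ => key c
      _ = 8 := by simp
  omega

lemma compact_PP (hm : 0 < m) (hn : 0 < n) (hp₀ : p₀ ∈ FareyComplex m n) :
    IsCompact (PP m n p₀) :=
  (isCompact_Icc : IsCompact (Set.Icc ((0,0) : ℝ × ℝ) (1,1))).of_isClosed_subset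
    (isClosed_PP m n p₀) (PP_subset_square m n p₀ hm hn hp₀)

lemma hull_eq (hm : 0 < m) (hn : 0 < n) (hp₀ : p₀ ∈ FareyComplex m n) :
    PP m n p₀ = convexHull ℝ (Set.extremePoints ℝ (PP m n p₀)) := by
  have h1 := closure_convexHull_extremePoints (compact_PP m n p₀ hm hn hp₀) (convex_PP m n p₀)
  have hcl : IsClosed (convexHull ℝ (Set.extremePoints ℝ (PP m n p₀))) :=
    (finite_extremePoints m n p₀ hm hn hp₀).isClosed_convexHull (𝕜 := ℝ)
  rw [hcl.closure_eq] at h1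
  exact h1.symm

lemma seg_coord {a b q : ℝ × ℝ} (h : q ∈ segment ℝ a b) :
    ∃ v : ℝ, q.1 - a.1 = v * (b.1 - a.1) ∧ q.2 - a.2 = v * (b.2 - a.2) := by
  obtain ⟨u, v, _, _, huv, heq⟩ := h
  have h1 : u * a.1 + v * b.1 = q.1 := by
    have := congrArg Prod.fst heq
    simpa [Prod.fst_add, Prod.smul_fst, smul_eq_mul] using this
  have h2 : u * a.2 + v * b.2 = q.2 := by
    have := congrArg Prod.snd heq
    simpa [Prod.snd_add, Prod.smul_snd, smul_eq_mul] using this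
  exact ⟨v, by linear_combination (-1 : ℝ) * h1 + a.1 * huv,
    by linear_combination (-1 : ℝ) * h2 + a.2 * huv⟩

lemma card_extreme_ge_three (hm : 0 < m) (hn : 0 < n) (hp₀ : p₀ ∈ FareyComplex m n) :
    3 ≤ (finite_extremePoints m n p₀ hm hn hp₀).toFinset.card := by
  by_contra hcon
  push_neg at hcon
  set S := (finite_extremePoints m n p₀ hm hn hp₀).toFinset with hS
  have hcoe : (S : Set (ℝ × ℝ)) = Set.extremePoints ℝ (PP m n p₀) :=
    Set.Finite.coe_toFinset _
  obtain ⟨a, b, hab⟩ : ∃ a b : ℝ × ℝ, (S : Set (ℝ × ℝ)) ⊆ {a, b} := by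
    interval_cases h : S.card
    · refine ⟨0, 0, ?_⟩
      rw [Finset.card_eq_zero.mp h]
      simp
    · obtain ⟨a, ha⟩ := Finset.card_eq_one.mp h
      refine ⟨a, a, ?_⟩
      rw [ha]
      simp
    · obtain ⟨a, b, _, hab⟩ := Finset.card_eq_two.mp h
      refine ⟨a, b, ?_⟩
      rw [hab]
      simp
  have hsub : PP m n p₀ ⊆ segment ℝ a b := by
    rw [hull_eq m n p₀ hm hn hp₀, ← hcoe, ← convexHull_pair]
    exact convexHull_mono hab
  obtain ⟨r, hr, hball⟩ := Metric.isOpen_iff.mp (isOpen_CC m n p₀) p₀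
    (p₀_mem_CC m n p₀ hp₀)
  have hseg : ∀ w : ℝ × ℝ, ‖w‖ < r → p₀ + w ∈ segment ℝ a b := by
    intro w hw
    apply hsub
    apply CC_subset_PP m n p₀
    apply hball
    rw [Metric.mem_ball, dist_eq_norm, add_sub_cancel_left]
    exact hw
  set ε := r / 2 with hε
  have hεpos : 0 < ε := by positivity
  have hnorm1 : ‖((ε:ℝ), (0:ℝ))‖ < r := by
    rw [Prod.norm_def]
    simp only [Real.norm_eq_abs, abs_of_pos hεpos, abs_zero]
    rw [max_eq_left hεpos.le]
    linarith
  have hnorm1' : ‖((-ε:ℝ), (0:ℝ))‖ < r := by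
    rw [Prod.norm_def]
    simp only [Real.norm_eq_abs, abs_neg, abs_of_pos hεpos, abs_zero]
    rw [max_eq_left hεpos.le]
    linarith
  have hnorm2 : ‖((0:ℝ), (ε:ℝ))‖ < r := by
    rw [Prod.norm_def]
    simp only [Real.norm_eq_abs, abs_of_pos hεpos, abs_zero]
    rw [max_eq_right hεpos.le]
    linarith
  have hnorm2' : ‖((0:ℝ), (-ε:ℝ))‖ < r := by
    rw [Prod.norm_def]
    simp only [Real.norm_eq_abs, abs_neg, abs_of_pos hεpos, abs_zero]
    rw [max_eq_right hεpos.le]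
    linarith
  obtain ⟨v1, s1f, s1s⟩ := seg_coord (hseg _ hnorm1)
  obtain ⟨v2, s2f, s2s⟩ := seg_coord (hseg _ hnorm1')
  obtain ⟨v3, s3f, s3s⟩ := seg_coord (hseg _ hnorm2)
  obtain ⟨v4, s4f, s4s⟩ := seg_coord (hseg _ hnorm2')
  simp only [Prod.fst_add, Prod.snd_add] at s1f s1s s2f s2s s3f s3s s4f s4s
  set A1 := b.1 - a.1
  set A2 := b.2 - a.2
  have e1 : (v1 - v2) * A1 = 2 * ε := by linarith
  have e2 : (v1 - v2) * A2 = 0 := by linarith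
  have e3 : (v3 - v4) * A1 = 0 := by linarith
  have e4 : (v3 - v4) * A2 = 2 * ε := by linarith
  have k1 : ((v1 - v2) * A1) * ((v3 - v4) * A2) = (2*ε) * (2*ε) := by rw [e1, e4]
  have k2 : ((v1 - v2) * A2) * ((v3 - v4) * A1) = 0 := by rw [e2]; ring
  have k3 : (2*ε) * (2*ε) = 0 := by linear_combination k2 - k1
  nlinarith

/-- main geometric result, in terms of the closed cell -/
lemma main_result (hm : 0 < m) (hn : 0 < n) (hp₀ : p₀ ∈ FareyComplex m n) :
    ∃ S : Finset (ℝ × ℝ), (S.card = 3 ∨ S.card = 4) ∧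
      PP m n p₀ = convexHull ℝ (S : Set (ℝ × ℝ)) ∧
      (S : Set (ℝ × ℝ)) = Set.extremePoints ℝ (PP m n p₀) := by
  refine ⟨(finite_extremePoints m n p₀ hm hn hp₀).toFinset, ?_, ?_, Set.Finite.coe_toFinset _⟩
  · have h3 := card_extreme_ge_three m n p₀ hm hn hp₀
    have h4 := card_extreme_le_four m n p₀ hm hn hp₀
    omega
  · rw [Set.Finite.coe_toFinset]
    exact hull_eq m n p₀ hm hn hp₀
end Main
end TD

/-- Theorem of Tajine–Daurat: the closure of every connected component of the
Farey complex `CF(m,n)` is a triangle or a quadrilateral. -/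
theorem tajine_daurat (m n : ℕ) (hm : 0 < m) (hn : 0 < n)
    (K : Set (ℝ × ℝ)) (p₀ : ℝ × ℝ) (hp₀ : p₀ ∈ FareyComplex m n)
    (hK : K = connectedComponentIn (FareyComplex m n) p₀) :
    ∃ S : Finset (ℝ × ℝ), (S.card = 3 ∨ S.card = 4) ∧
      closure K = convexHull ℝ (S : Set (ℝ × ℝ)) ∧
      (S : Set (ℝ × ℝ)) = Set.extremePoints ℝ (closure K) := by
  subst hK
  rw [TD.K_eq_CC m n p₀ hm hn hp₀, TD.closure_CC m n p₀ hm hn hp₀]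
  exact TD.main_result m n p₀ hm hn hp₀
end
end

section
/- Let K be a connected component of CF(m,n) whose closure is a quadrilateral, with boundary the CPD (A, B, C, D) (counterclockwise). Then it is impossible that B - A lies in the closed quadrant Q_1 and C - B lies in the closed quadrant Q_3. -/
noncomputable section

/-- For a connected component of the Farey complex whose closure is a
quadrilateral with counterclockwise boundary CPD `(A, B, C, D)`, the
configuration `B - A ∈ Q1` and `C - B ∈ Q3` is impossible.  (The established
facts that consecutive edge vectors, and opposite edge vectors, are never in
the same quadrant are available as hypotheses.) -/
theorem quadrilateral_no_opposite_consecutive (m n : ℕ) (hm : 0 < m) (hn : 0 < n)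
    (K : Set (ℝ × ℝ)) (p₀ : ℝ × ℝ) (hp₀ : p₀ ∈ FareyComplex m n)
    (hK : K = connectedComponentIn (FareyComplex m n) p₀)
    (A : ℤ → ℝ × ℝ) (hA : IsCPD 4 A)
    (hfr : frontier (closure K) = Polyline 4 A)
    (hcons : ∀ k : ℤ, ¬ SameQuadrant (A (k + 1) - A k) (A (k + 2) - A (k + 1)))
    (hopp₁ : ¬ SameQuadrant (A 1 - A 0) (A 3 - A 2))
    (hopp₂ : ¬ SameQuadrant (A 2 - A 1) (A 0 - A 3)) :
    ¬ (Q1 (A 1 - A 0) ∧ Q3 (A 2 - A 1)) := by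
  rintro ⟨h1, h2⟩
  obtain ⟨-, hper, hdet⟩ := hA
  have hA4 : A 4 = A 0 := by simpa using hper 0
  have hA5 : A 5 = A 1 := by simpa using hper 1
  have d23 := hdet 1 3 (by norm_num) (by norm_num) (by norm_num) (by norm_num)
    (by norm_num) (by norm_num)
  have d41 := hdet 3 1 (by norm_num) (by norm_num) (by norm_num) (by norm_num)
    (by norm_num) (by norm_num)
  norm_num [hA4] at d23 d41
  have hc1 := hcons 1
  have hc2 := hcons 2
  have hc3 := hcons 3
  norm_num [hA4, hA5] at hc1 hc2 hc3
  -- components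
  obtain ⟨h11, h12⟩ := h1
  obtain ⟨h21, h22⟩ := h2
  simp only [Prod.fst_sub, Prod.snd_sub] at h11 h12 h21 h22
  simp only [det2, Prod.fst_sub, Prod.snd_sub] at d23 d41
  -- v3 is not in Q1 (else same quadrant as v1) and not in Q3 (else same quadrant as v2)
  have hv3Q1 : ¬ Q1 (A 3 - A 2) := fun h => hopp₁ (Or.inl ⟨⟨h11, h12⟩, h⟩)
  have hv3Q3 : ¬ Q3 (A 3 - A 2) := fun h => hc1 (Or.inr (Or.inr (Or.inl ⟨⟨h21, h22⟩, h⟩)))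
  -- v4 is not in Q3 (hopp₂) and not in Q1 (hc3)
  have hv4Q3 : ¬ Q3 (A 0 - A 3) := fun h => hopp₂ (Or.inr (Or.inr (Or.inl ⟨⟨h21, h22⟩, h⟩)))
  have hv4Q1 : ¬ Q1 (A 0 - A 3) := fun h => hc3 (Or.inl ⟨h, h11, h12⟩)
  simp only [Q1, Q3, Prod.fst_sub, Prod.snd_sub, not_and, not_le] at hv3Q1 hv3Q3 hv4Q1 hv4Q3
  -- v3 is strictly in int Q2 or int Q4
  have hv3 : ((A 3).1 < (A 2).1 ∧ (A 2).2 < (A 3).2) ∨ ((A 2).1 < (A 3).1 ∧ (A 3).2 < (A 2).2) := by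
    rcases lt_or_ge ((A 3).1 - (A 2).1) 0 with hx | hx
    · left
      refine ⟨by linarith, ?_⟩
      by_contra hy
      exact absurd (by linarith : (A 3).2 - (A 2).2 ≤ 0) (not_le.2 (hv3Q3 (by linarith)))
    · right
      have hy := hv3Q1 (by linarith)
      refine ⟨?_, by linarith⟩
      rcases eq_or_lt_of_le hx with hx' | hx'
      · exact absurd (by linarith : (A 3).2 - (A 2).2 ≤ 0) (not_le.2 (hv3Q3 (by linarith)))
      · linarith
  have hv4 : ((A 0).1 < (A 3).1 ∧ (A 3).2 < (A 0).2) ∨ ((A 3).1 < (A 0).1 ∧ (A 0).2 < (A 3).2) := by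
    rcases lt_or_ge ((A 0).1 - (A 3).1) 0 with hx | hx
    · left
      refine ⟨by linarith, ?_⟩
      by_contra hy
      exact absurd (by linarith : (A 0).2 - (A 3).2 ≤ 0) (not_le.2 (hv4Q3 (by linarith)))
    · right
      have hy := hv4Q1 (by linarith)
      refine ⟨?_, by linarith⟩
      rcases eq_or_lt_of_le hx with hx' | hx'
      · exact absurd (by linarith : (A 0).2 - (A 3).2 ≤ 0) (not_le.2 (hv4Q3 (by linarith)))
      · linarith
  rcases hv3 with ⟨hx3, hy3⟩ | ⟨hx3, hy3⟩
  · -- v3 in int Q2: contradicts d23 : 0 < det2 v2 (v2+v3)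
    nlinarith [mul_nonpos_of_nonpos_of_nonneg h21 (le_of_lt (by linarith : (0:ℝ) < (A 3).2 - (A 2).2)),
      mul_nonneg (neg_nonneg.2 h22) (neg_nonneg.2 (le_of_lt (by linarith : (A 3).1 - (A 2).1 < 0)))]
  rcases hv4 with ⟨hx4, hy4⟩ | ⟨hx4, hy4⟩
  · -- v4 int Q2: contradicts d41 : 0 < det2 v4 (v4+v1)
    nlinarith [mul_nonpos_of_nonpos_of_nonneg (le_of_lt (by linarith : (A 0).1 - (A 3).1 < 0)) h12,
      mul_nonneg (le_of_lt (by linarith : (0:ℝ) < (A 0).2 - (A 3).2)) h11]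
  · -- v3 int Q4, v4 int Q4: consecutive same quadrant, contradiction with hc2
    exact hc2 (Or.inr (Or.inr (Or.inr ⟨⟨by simp [Prod.fst_sub]; linarith, by simp [Prod.snd_sub]; linarith⟩,
      ⟨by simp [Prod.fst_sub]; linarith, by simp [Prod.snd_sub]; linarith⟩⟩)))
end
end

section
/- Let K be a connected component of CF(m,n) whose closure is a quadrilateral, represented by the CPD (A_k)_{k∈ℤ} of period 4. Then there exists an integer p such that for each i ∈ {1,2,3,4}, the edge vector A_{p+i} - A_{p+i-1} lies in the quadrant Q_i. -/
noncomputable section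

/-- Two vectors lie in opposite closed quadrants. -/
def OppositeQuadrants (v w : ℝ × ℝ) : Prop :=
  (Q1 v ∧ Q3 w) ∨ (Q3 v ∧ Q1 w) ∨ (Q2 v ∧ Q4 w) ∨ (Q4 v ∧ Q2 w)

lemma quadrant_total (v : ℝ × ℝ) : Q1 v ∨ Q2 v ∨ Q3 v ∨ Q4 v := by
  unfold Q1 Q2 Q3 Q4
  rcases le_total 0 v.1 with h1|h1 <;> rcases le_total 0 v.2 with h2|h2 <;> tauto

lemma det2_addself (v w : ℝ × ℝ) : det2 v (v + w) = det2 v w := by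
  unfold det2; simp [Prod.fst_add, Prod.snd_add]; ring

lemma det2_negr (a b : ℝ × ℝ) : det2 a (-b) = det2 b a := by
  unfold det2; simp; ring

lemma key (e f : ℝ × ℝ) (hs : ¬ SameQuadrant e f) (ho : ¬ OppositeQuadrants e f)
    (hd : 0 < det2 e f) :
    (Q1 e → Q2 f) ∧ (Q2 e → Q3 f) ∧ (Q3 e → Q4 f) ∧ (Q4 e → Q1 f) := by
  have hf := quadrant_total f
  have hs1 : ¬ (Q1 e ∧ Q1 f) := fun h => hs (Or.inl h)
  have hs2 : ¬ (Q2 e ∧ Q2 f) := fun h => hs (Or.inr (Or.inl h))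
  have hs3 : ¬ (Q3 e ∧ Q3 f) := fun h => hs (Or.inr (Or.inr (Or.inl h)))
  have hs4 : ¬ (Q4 e ∧ Q4 f) := fun h => hs (Or.inr (Or.inr (Or.inr h)))
  have ho13 : ¬ (Q1 e ∧ Q3 f) := fun h => ho (Or.inl h)
  have ho31 : ¬ (Q3 e ∧ Q1 f) := fun h => ho (Or.inr (Or.inl h))
  have ho24 : ¬ (Q2 e ∧ Q4 f) := fun h => ho (Or.inr (Or.inr (Or.inl h)))
  have ho42 : ¬ (Q4 e ∧ Q2 f) := fun h => ho (Or.inr (Or.inr (Or.inr h)))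
  unfold det2 at hd
  refine ⟨fun he => ?_, fun he => ?_, fun he => ?_, fun he => ?_⟩
  · rcases hf with h|h|h|h
    · exact absurd ⟨he, h⟩ hs1
    · exact h
    · exact absurd ⟨he, h⟩ ho13
    · exfalso; obtain ⟨a1, a2⟩ := he; obtain ⟨b1, b2⟩ := h; nlinarith
  · rcases hf with h|h|h|h
    · exfalso; obtain ⟨a1, a2⟩ := he; obtain ⟨b1, b2⟩ := h; nlinarith
    · exact absurd ⟨he, h⟩ hs2
    · exact h
    · exact absurd ⟨he, h⟩ ho24
  · rcases hf with h|h|h|h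
    · exact absurd ⟨he, h⟩ ho31
    · exfalso; obtain ⟨a1, a2⟩ := he; obtain ⟨b1, b2⟩ := h; nlinarith
    · exact absurd ⟨he, h⟩ hs3
    · exact h
  · rcases hf with h|h|h|h
    · exact h
    · exact absurd ⟨he, h⟩ ho42
    · exfalso; obtain ⟨a1, a2⟩ := he; obtain ⟨b1, b2⟩ := h; nlinarith
    · exact absurd ⟨he, h⟩ hs4

/-- If the closure of a connected component of the Farey complex is a
quadrilateral, represented by the CPD `(A_k)` of period 4, then some shift `p`
puts the four edge vectors in the quadrants `Q1, Q2, Q3, Q4` in this order. -/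
theorem quadrilateral_edge_quadrants (m n : ℕ) (hm : 0 < m) (hn : 0 < n)
    (K : Set (ℝ × ℝ)) (p₀ : ℝ × ℝ) (hp₀ : p₀ ∈ FareyComplex m n)
    (hK : K = connectedComponentIn (FareyComplex m n) p₀)
    (A : ℤ → ℝ × ℝ) (hA : IsCPD 4 A)
    (hfr : frontier (closure K) = Polyline 4 A)
    (hcons : ∀ k : ℤ, ¬ SameQuadrant (A (k + 1) - A k) (A (k + 2) - A (k + 1)))
    (hopp₁ : ¬ SameQuadrant (A 1 - A 0) (A 3 - A 2))
    (hopp₂ : ¬ SameQuadrant (A 2 - A 1) (A 0 - A 3))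
    (hnoOpp : ∀ k : ℤ, ¬ OppositeQuadrants (A (k + 1) - A k) (A (k + 2) - A (k + 1))) :
    ∃ p : ℤ, Q1 (A (p + 1) - A p) ∧ Q2 (A (p + 2) - A (p + 1)) ∧
      Q3 (A (p + 3) - A (p + 2)) ∧ Q4 (A (p + 4) - A (p + 3)) := by
  obtain ⟨-, hper, hdet⟩ := hA
  have h4 : A 4 = A 0 := by have := hper 0; norm_num at this; exact this
  have h5 : A 5 = A 1 := by have := hper 1; norm_num at this; exact this
  have h6 : A 6 = A 2 := by have := hper 2; norm_num at this; exact this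
  have h7 : A 7 = A 3 := by have := hper 3; norm_num at this; exact this
  have d01 : 0 < det2 (A 1 - A 0) (A 2 - A 1) := by
    have h := hdet 0 2 (by norm_num) (by norm_num) (by norm_num) (by norm_num)
      (by norm_num) (by norm_num)
    norm_num at h
    rwa [show A 2 - A 0 = (A 1 - A 0) + (A 2 - A 1) from by abel, det2_addself] at h
  have d12 : 0 < det2 (A 2 - A 1) (A 3 - A 2) := by
    have h := hdet 1 3 (by norm_num) (by norm_num) (by norm_num) (by norm_num)
      (by norm_num) (by norm_num)
    norm_num at h
    rwa [show A 3 - A 1 = (A 2 - A 1) + (A 3 - A 2) from by abel, det2_addself] at h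
  have d23 : 0 < det2 (A 3 - A 2) (A 4 - A 3) := by
    have h := hdet 3 2 (by norm_num) (by norm_num) (by norm_num) (by norm_num)
      (by norm_num) (by norm_num)
    norm_num at h
    rwa [show A 2 - A 3 = -(A 3 - A 2) from by abel, det2_negr] at h
  have d30 : 0 < det2 (A 4 - A 3) (A 1 - A 0) := by
    have h := hdet 3 1 (by norm_num) (by norm_num) (by norm_num) (by norm_num)
      (by norm_num) (by norm_num)
    norm_num at h
    rw [h4] at h
    rw [show A 1 - A 3 = (A 0 - A 3) + (A 1 - A 0) from by abel, det2_addself] at h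
    rw [h4]; exact h
  have s01 := hcons 0; have s12 := hcons 1; have s23 := hcons 2; have s30 := hcons 3
  have o01 := hnoOpp 0; have o12 := hnoOpp 1; have o23 := hnoOpp 2; have o30 := hnoOpp 3
  norm_num at s01 s12 s23 s30 o01 o12 o23 o30
  rw [h4] at d23 d30 s23 o23
  rw [h5, h4] at s30 o30
  have k01 := key _ _ s01 o01 d01
  have k12 := key _ _ s12 o12 d12
  have k23 := key _ _ s23 o23 d23
  have k30 := key _ _ s30 o30 d30
  rcases quadrant_total (A 1 - A 0) with h|h|h|h
  · have q2 := k01.1 h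
    have q3 := k12.2.1 q2
    have q4 := k23.2.2.1 q3
    refine ⟨0, ?_⟩
    norm_num
    rw [h4]
    exact ⟨h, q2, q3, q4⟩
  · have q3 := k01.2.1 h
    have q4 := k12.2.2.1 q3
    have q1 := k23.2.2.2 q4
    refine ⟨3, ?_⟩
    norm_num
    rw [h5, h6, h7, h4]
    exact ⟨q1, h, q3, q4⟩
  · have q4 := k01.2.2.1 h
    have q1 := k12.2.2.2 q4
    have q2 := k23.1 q1
    refine ⟨2, ?_⟩
    norm_num
    rw [h5, h6, h4]
    exact ⟨q1, q2, h, q4⟩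
  · have q1 := k01.2.2.2 h
    have q2 := k12.1 q1
    have q3 := k23.2.1 q2
    refine ⟨1, ?_⟩
    norm_num
    rw [h5, h4]
    exact ⟨q1, q2, q3, h⟩
end
end
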